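/- arXiv:1411.4923 — 2 statements merged into one kernel-verified Lean document; each statement's English description precedes it below -/
import Mathlib

section
/- For m ≥ 1 let u^{2m−1} = ⟨u_{2m−1}, u_{2m−3}, …, u₁, u₋₁, u₋₃, u₋₅, …⟩ be a sequence of maps in C(Ω̄; l∞) ∩ C¹(Ω; l∞), each of which is L-analytic (here the functions u_k : Ω̄ → ℂ, k odd, are fixed, and u^{2m−1} is obtained by augmenting ⟨u₋₁, u₋₃, u₋₅, …⟩ by the m terms u_{2m−1}, u_{2m−3}, …, u₁). Assume that for every m ≥ 1 the boundary traces satisfy u_{2m−1}|_Γ = conj(u_{−(2m−1)})|_Γ. Then u_{2m−1}(z) = conj(u_{−(2m−1)}(z)) for all z ∈ Ω and all m ≥ 1. -/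
noncomputable section

open Complex MeasureTheory Filter Topology Metric Set

namespace RangeDoppler

/-- The Cauchy–Riemann operator `∂̄ = (∂_{x₁} + i ∂_{x₂})/2` acting on maps `ℂ → ℂ`,
identifying `ℝ²` with `ℂ`. -/
def dbar (f : ℂ → ℂ) (z : ℂ) : ℂ :=
  (fderiv ℝ f z 1 + Complex.I * fderiv ℝ f z Complex.I) / 2

/-- The Cauchy–Riemann operator `∂ = (∂_{x₁} − i ∂_{x₂})/2`. -/
def ddz (f : ℂ → ℂ) (z : ℂ) : ℂ :=
  (fderiv ℝ f z 1 - Complex.I * fderiv ℝ f z Complex.I) / 2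

/-- The gradient of a real-valued function on the plane, encoded as a complex number
`∂₁ f + i ∂₂ f`. -/
def gradC (f : ℂ → ℝ) (z : ℂ) : ℂ :=
  (fderiv ℝ f z 1 : ℝ) + (fderiv ℝ f z Complex.I : ℝ) * Complex.I

/-- Euclidean dot product of two vectors of `ℝ²` encoded as complex numbers. -/
def dotJ (θ w : ℂ) : ℝ := θ.re * w.re + θ.im * w.im

/- In all that follows, a sequence-valued map `u : ℕ → ℂ → ℂ` encodes
`⟨u₋₁, u₋₂, u₋₃, …⟩`, the component `u n` being `u₋₍ₙ₊₁₎`. -/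

/-- `u = ⟨u₋₁, u₋₂, …⟩` is bounded and continuous in the `l∞`-norm on `S`. -/
def SeqContLinf (S : Set ℂ) (u : ℕ → ℂ → ℂ) : Prop :=
  (∀ z ∈ S, BddAbove (Set.range fun n => ‖u n z‖)) ∧
  ∀ z₀ ∈ S, ∀ ε > 0, ∃ δ > 0, ∀ z ∈ S, dist z z₀ < δ →
    ∀ n, ‖u n z - u n z₀‖ < ε

/-- `u = ⟨u₋₁, u₋₂, …⟩` is (pointwise summable and) continuous in the `l₁`-norm on `S`. -/
def SeqContL1 (S : Set ℂ) (u : ℕ → ℂ → ℂ) : Prop :=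
  (∀ z ∈ S, Summable fun n => ‖u n z‖) ∧
  ∀ z₀ ∈ S, ∀ ε > 0, ∃ δ > 0, ∀ z ∈ S, dist z z₀ < δ →
    (∑' n, ‖u n z - u n z₀‖) < ε

/-- `u` is `L^k`-analytic on `Ω` (k = 1, 2): `u ∈ C(Ω̄; l∞) ∩ C¹(Ω; l∞)` and
`∂̄ u + L^k ∂ u = 0` on `Ω`, where `L` is the left shift. -/
def IsLkAnalytic (k : ℕ) (Ω : Set ℂ) (u : ℕ → ℂ → ℂ) : Prop :=
  SeqContLinf (closure Ω) u ∧ (∀ n, ContDiffOn ℝ 1 (u n) Ω) ∧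
  ∀ n, ∀ z ∈ Ω, dbar (u n) z + ddz (u (n + k)) z = 0

/-- `u ∈ l^{1,k}_∞(Γ)`: `sup_{ζ∈Γ} Σ_j j^k |u₋ⱼ(ζ)| < ∞`. -/
def MemL1k (k : ℕ) (Γ : Set ℂ) (u : ℕ → ℂ → ℂ) : Prop :=
  (∀ ζ ∈ Γ, Summable fun j : ℕ => ((j : ℝ) + 1) ^ k * ‖u j ζ‖) ∧
  ∃ C : ℝ, ∀ ζ ∈ Γ, (∑' j : ℕ, ((j : ℝ) + 1) ^ k * ‖u j ζ‖) ≤ C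

/-- `u ∈ C^α(Γ; l₁)`: bounded and `α`-Hölder continuous in the `l₁`-norm. -/
def MemCalphaL1 (α : ℝ) (Γ : Set ℂ) (u : ℕ → ℂ → ℂ) : Prop :=
  (∀ ζ ∈ Γ, Summable fun j : ℕ => ‖u j ζ‖) ∧
  (∃ C : ℝ, ∀ ζ ∈ Γ, (∑' j : ℕ, ‖u j ζ‖) ≤ C) ∧
  ∃ C : ℝ, ∀ ζ ∈ Γ, ∀ η ∈ Γ, (∑' j : ℕ, ‖u j ζ - u j η‖) ≤ C * dist ζ η ^ α

/-- `u ∈ Y_α`: `u ∈ l^{1,2}_∞(Γ)` together with the weighted Hölder estimate. -/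
def MemYalpha (α : ℝ) (Γ : Set ℂ) (u : ℕ → ℂ → ℂ) : Prop :=
  MemL1k 2 Γ u ∧
  ∃ C : ℝ, ∀ ζ ∈ Γ, ∀ η ∈ Γ,
    (∑' j : ℕ, ((j : ℝ) + 1) * ‖u j ζ - u j η‖) ≤ C * dist ζ η ^ α

/-- Contour integral `∫_Γ f(ζ) dζ` along the parametrized curve `γ`. -/
def cInt (γ : ℝ → ℂ) (f : ℂ → ℂ) : ℂ := ∫ t in (0:ℝ)..1, f (γ t) * deriv γ t

/-- Contour integral `∫_Γ f(ζ) dζ̄` along the parametrized curve `γ`. -/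
def cIntConj (γ : ℝ → ℂ) (f : ℂ → ℂ) : ℂ :=
  ∫ t in (0:ℝ)..1, f (γ t) * (starRingEnd ℂ) (deriv γ t)

/-- `γ` is a regular `C¹` periodic parametrization of the boundary `Γ = ∂Ω`. -/
def IsBoundaryParam (Ω : Set ℂ) (γ : ℝ → ℂ) : Prop :=
  ContDiff ℝ 1 γ ∧ (∀ t, γ (t + 1) = γ t) ∧ γ '' Set.Ico 0 1 = frontier Ω ∧
  Set.InjOn γ (Set.Ico 0 1) ∧ ∀ t, deriv γ t ≠ 0

/-- The Bukhgeim–Cauchy operator: `bukhCauchy γ g n z` is `(Bg)₋₍ₙ₊₁₎(z)`. -/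
def bukhCauchy (γ : ℝ → ℂ) (g : ℕ → ℂ → ℂ) (n : ℕ) (z : ℂ) : ℂ :=
  (1 / (2 * (Real.pi : ℂ) * Complex.I)) *
    ((∑' j : ℕ, cInt γ fun ζ => g (n + j) ζ * ((starRingEnd ℂ) (ζ - z)) ^ j / (ζ - z) ^ (j + 1)) -
      ∑' j : ℕ, cIntConj γ fun ζ => g (n + 1 + j) ζ * ((starRingEnd ℂ) (ζ - z)) ^ j / (ζ - z) ^ (j + 1))

/-- The Hilbert transform for `L`-analytic maps: `hilbT γ g n ξ` is `(Hg)₋₍ₙ₊₁₎(ξ)`. -/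
def hilbT (γ : ℝ → ℂ) (g : ℕ → ℂ → ℂ) (n : ℕ) (ξ : ℂ) : ℂ :=
  (1 / (Real.pi : ℂ)) * cInt γ (fun ζ => g n ζ / (ζ - ξ)) +
    (1 / (Real.pi : ℂ)) *
      (cInt γ (fun ζ =>
          (∑' j : ℕ, g (n + 1 + j) ζ * ((starRingEnd ℂ) (ζ - ξ) / (ζ - ξ)) ^ (j + 1)) / (ζ - ξ)) -
        cIntConj γ fun ζ =>
          (∑' j : ℕ, g (n + 1 + j) ζ * ((starRingEnd ℂ) (ζ - ξ) / (ζ - ξ)) ^ (j + 1)) /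
            (starRingEnd ℂ) (ζ - ξ))

/-- The range condition `(I + iH)g = 0` on `Γ`. -/
def HilbertVanish (γ : ℝ → ℂ) (Γ : Set ℂ) (g : ℕ → ℂ → ℂ) : Prop :=
  ∀ n, ∀ ξ ∈ Γ, g n ξ + Complex.I * hilbT γ g n ξ = 0

/-- Distance `τ₊(x,θ)` from `x` to the boundary in the direction `θ`. -/
def tauP (Ω : Set ℂ) (x θ : ℂ) : ℝ := sSup {t : ℝ | 0 ≤ t ∧ x + t • θ ∈ closure Ω}

/-- Distance `τ₋(x,θ)` from `x` to the boundary in the direction `−θ`. -/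
def tauM (Ω : Set ℂ) (x θ : ℂ) : ℝ := sSup {t : ℝ | 0 ≤ t ∧ x - t • θ ∈ closure Ω}

/-- The divergence beam transform `Da(x,θ) = ∫₀^{τ(x,θ)} a(x+tθ) dt`. -/
def Dbeam (Ω : Set ℂ) (a : ℂ → ℝ) (x θ : ℂ) : ℝ :=
  ∫ t in (0:ℝ)..(tauP Ω x θ + tauM Ω x θ), a (x + t • θ)

/-- `g ∈ DF`: `g` is (non-attenuated) Doppler data of the vector field `F`. -/
def IsDopplerData (Ω : Set ℂ) (F : ℂ → ℂ) (g : ℂ → ℂ → ℝ) : Prop :=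
  ∀ x ∈ closure Ω, ∀ θ ∈ sphere (0:ℂ) 1,
    g (x + tauP Ω x θ • θ) θ - g (x - tauM Ω x θ • θ) θ =
      ∫ t in (-(tauM Ω x θ))..(tauP Ω x θ), dotJ θ (F (x + t • θ))

/-- `g ∈ D_aF`: `g` is attenuated Doppler data of `F` with attenuation `a`. -/
def IsAttenDopplerData (Ω : Set ℂ) (a : ℂ → ℝ) (F : ℂ → ℂ) (g : ℂ → ℂ → ℝ) : Prop :=
  ∀ x ∈ closure Ω, ∀ θ ∈ sphere (0:ℂ) 1,
    g (x + tauP Ω x θ • θ) θ -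
        Real.exp (-Dbeam Ω a (x - tauM Ω x θ • θ) θ) * g (x - tauM Ω x θ • θ) θ =
      ∫ t in (-(tauM Ω x θ))..(tauP Ω x θ),
        dotJ θ (F (x + t • θ)) * Real.exp (-Dbeam Ω a (x + t • θ) θ)

/-- `g ∈ R_af`: `g` is attenuated X-ray data of `f` with attenuation `a`. -/
def IsAttenXrayData (Ω : Set ℂ) (a f : ℂ → ℝ) (g : ℂ → ℂ → ℝ) : Prop :=
  ∀ x ∈ closure Ω, ∀ θ ∈ sphere (0:ℂ) 1,
    g (x + tauP Ω x θ • θ) θ -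
        Real.exp (-Dbeam Ω a (x - tauM Ω x θ • θ) θ) * g (x - tauM Ω x θ • θ) θ =
      ∫ t in (-(tauM Ω x θ))..(tauP Ω x θ),
        f (x + t • θ) * Real.exp (-Dbeam Ω a (x + t • θ) θ)

/-- The direction `θ = (cos φ, sin φ)` as a point of the unit circle in `ℂ`. -/
def circleDir (φ : ℝ) : ℂ := Complex.exp ((φ : ℂ) * Complex.I)

/-- The `n`-th Fourier mode (in the angular variable) of a function on `S¹`. -/
def fModeC (G : ℂ → ℂ) (n : ℤ) : ℂ :=
  (1 / (2 * Real.pi)) *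
    ∫ φ in (0:ℝ)..(2 * Real.pi), G (circleDir φ) * Complex.exp (-(n : ℂ) * (φ : ℂ) * Complex.I)

/-- The `n`-th angular Fourier mode `gₙ(ζ)` of boundary data `g` on `Γ × S¹`. -/
def fMode (g : ℂ → ℂ → ℝ) (n : ℤ) (ζ : ℂ) : ℂ := fModeC (fun θ => (g ζ θ : ℂ)) n

/-- The sequence `g^{even} = ⟨g₋₂, g₋₄, g₋₆, …⟩`. -/
def gEven (g : ℂ → ℂ → ℝ) : ℕ → ℂ → ℂ := fun n ζ => fMode g (-(2 * ((n : ℤ) + 1))) ζ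

/-- The augmented sequence `g^{2m−1} = ⟨g_{2m−1}, g_{2m−3}, …, g₁, g₋₁, g₋₃, …⟩`. -/
def gOddAug (g : ℂ → ℂ → ℝ) (m : ℕ) : ℕ → ℂ → ℂ := fun n ζ =>
  if (n : ℤ) < (m : ℤ) then fMode g (2 * ((m : ℤ) - (n : ℤ)) - 1) ζ
  else fMode g (-(2 * ((n : ℤ) - (m : ℤ)) + 1)) ζ

/-- `g ∈ C^α(Γ; C^{p,α}(S¹))` for boundary data `g` on `Γ × S¹`. -/
def MemCalphaGammaCpalphaS1 (α : ℝ) (p : ℕ) (Γ : Set ℂ) (g : ℂ → ℂ → ℝ) : Prop :=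
  (∀ ζ ∈ Γ, ContDiff ℝ p fun φ : ℝ => g ζ (circleDir φ)) ∧
  (∃ C : ℝ, ∀ ζ ∈ Γ, ∀ i ≤ p, ∀ φ ψ : ℝ,
      |iteratedDeriv i (fun s : ℝ => g ζ (circleDir s)) φ -
        iteratedDeriv i (fun s : ℝ => g ζ (circleDir s)) ψ| ≤ C * |φ - ψ| ^ α) ∧
  ∃ C : ℝ, ∀ ζ ∈ Γ, ∀ η ∈ Γ, ∀ i ≤ p, ∀ φ : ℝ,
    |iteratedDeriv i (fun s : ℝ => g ζ (circleDir s)) φ -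
      iteratedDeriv i (fun s : ℝ => g η (circleDir s)) φ| ≤ C * dist ζ η ^ α

/-- `g ∈ C⁰(Γ; C^{p,α}(S¹))` for boundary data `g` on `Γ × S¹`. -/
def MemC0GammaCpalphaS1 (α : ℝ) (p : ℕ) (Γ : Set ℂ) (g : ℂ → ℂ → ℝ) : Prop :=
  (∀ ζ ∈ Γ, ContDiff ℝ p fun φ : ℝ => g ζ (circleDir φ)) ∧
  (∃ C : ℝ, ∀ ζ ∈ Γ, ∀ φ ψ : ℝ,
      |iteratedDeriv p (fun s : ℝ => g ζ (circleDir s)) φ -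
        iteratedDeriv p (fun s : ℝ => g ζ (circleDir s)) ψ| ≤ C * |φ - ψ| ^ α) ∧
  ∀ ζ₀ ∈ Γ, ∀ ε > 0, ∃ δ > 0, ∀ ζ ∈ Γ, dist ζ ζ₀ < δ →
    ∀ θ ∈ sphere (0:ℂ) 1, |g ζ θ - g ζ₀ θ| < ε

/-- `f ∈ C^{p,α}`: `p` times continuously differentiable with globally `α`-Hölder
`p`-th derivative. -/
def MemCpalpha {X E : Type*} [NormedAddCommGroup X] [NormedSpace ℝ X]
    [NormedAddCommGroup E] [NormedSpace ℝ E] (p : ℕ) (α : ℝ) (f : X → E) : Prop :=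
  ContDiff ℝ p f ∧
  ∃ C : ℝ, ∀ x y : X, ‖iteratedFDeriv ℝ p f x - iteratedFDeriv ℝ p f y‖ ≤ C * dist x y ^ α

/-- `f ∈ C₀^{p,α}(Ω̄)`: a `C^{p,α}` function supported in `Ω̄`. -/
def MemC0palpha {E : Type*} [NormedAddCommGroup E] [NormedSpace ℝ E]
    (p : ℕ) (α : ℝ) (Ω : Set ℂ) (f : ℂ → E) : Prop :=
  MemCpalpha p α f ∧ tsupport f ⊆ closure Ω

/-- The Radon transform `Ra(s,θ) = ∫_ℝ a(sθ⊥ + tθ) dt`, with `θ⊥ = iθ`. -/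
def radonT (a : ℂ → ℝ) (s : ℝ) (θ : ℂ) : ℝ := ∫ t : ℝ, a (s • (Complex.I * θ) + t • θ)

/-- The classical Hilbert transform (principal value) on the line. -/
def pvHilbert (u : ℝ → ℝ) (s : ℝ) : ℝ :=
  limUnder (𝓝[>] (0:ℝ)) fun ε => (1 / Real.pi) * ∫ t in {t : ℝ | ε ≤ |s - t|}, u t / (s - t)

/-- The integrating factor `h(z,θ) = Da(z,θ) − (1/2)(I − iH)Ra(z·θ⊥, θ)`. -/
def hFun (Ω : Set ℂ) (a : ℂ → ℝ) (z θ : ℂ) : ℂ :=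
  (Dbeam Ω a z θ : ℂ) -
    (1 / 2) * ((radonT a (dotJ (Complex.I * θ) z) θ : ℂ) -
      Complex.I * (pvHilbert (fun s => radonT a s θ) (dotJ (Complex.I * θ) z) : ℂ))

/-- `α_k`, the `k`-th angular Fourier mode of `e^{−h}`. -/
def alphaMode (Ω : Set ℂ) (a : ℂ → ℝ) (k : ℕ) (z : ℂ) : ℂ :=
  fModeC (fun θ => Complex.exp (-hFun Ω a z θ)) (k : ℤ)

/-- `β_k`, the `k`-th angular Fourier mode of `e^{h}`. -/
def betaMode (Ω : Set ℂ) (a : ℂ → ℝ) (k : ℕ) (z : ℂ) : ℂ :=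
  fModeC (fun θ => Complex.exp (hFun Ω a z θ)) (k : ℤ)

/-- `g_h = ⟨γ₋₁, γ₋₂, …⟩`, the negative angular Fourier modes of `e^{−h}g` on `Γ`:
`gH Ω a g n ζ = γ₋₍ₙ₊₁₎(ζ)`. -/
def gH (Ω : Set ℂ) (a : ℂ → ℝ) (g : ℂ → ℂ → ℝ) : ℕ → ℂ → ℂ := fun n ζ =>
  fModeC (fun θ => Complex.exp (-hFun Ω a ζ θ) * (g ζ θ : ℂ)) (-((n : ℤ) + 1))

/-- `g_h^{even} = ⟨γ₋₂, γ₋₄, …⟩`. -/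
def gHeven (Ω : Set ℂ) (a : ℂ → ℝ) (g : ℂ → ℂ → ℝ) : ℕ → ℂ → ℂ :=
  fun n => gH Ω a g (2 * n + 1)

/-- `g_h^{odd} = ⟨γ₋₁, γ₋₃, …⟩`. -/
def gHodd (Ω : Set ℂ) (a : ℂ → ℝ) (g : ℂ → ℂ → ℝ) : ℕ → ℂ → ℂ :=
  fun n => gH Ω a g (2 * n)

/-- The function `u₋₁ = Σ_j β_j (B g_h)_{−1−j}` appearing in the range characterization
of the attenuated Doppler transform. -/
def uMinusOne (Ω : Set ℂ) (a : ℂ → ℝ) (γ : ℝ → ℂ) (g : ℂ → ℂ → ℝ) (z : ℂ) : ℂ :=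
  ∑' j : ℕ, betaMode Ω a j z * bukhCauchy γ (gH Ω a g) j z

/-- `g` is the trace on `Γ × S¹` of a solution `w` of the transport equation
`θ·∇w + aw = rhs` in `Ω × S¹`. -/
def IsTraceOfTransportSolution (Ω : Set ℂ) (a : ℂ → ℝ) (rhs : ℂ → ℂ → ℝ)
    (g : ℂ → ℂ → ℝ) : Prop :=
  ∃ w : ℂ → ℂ → ℝ,
    (∀ θ ∈ sphere (0:ℂ) 1,
      ContinuousOn (fun x => w x θ) (closure Ω) ∧ DifferentiableOn ℝ (fun x => w x θ) Ω) ∧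
    (∀ θ ∈ sphere (0:ℂ) 1, ∀ x ∈ Ω,
      fderiv ℝ (fun y => w y θ) x θ + a x * w x θ = rhs x θ) ∧
    ∀ ζ ∈ frontier Ω, ∀ θ ∈ sphere (0:ℂ) 1, w ζ θ = g ζ θ

/-- `u ∈ C^{1,α}(Ω; l∞)` (componentwise, with Hölder bounds for the derivative,
uniform in the component, on compact subsets). -/
def SeqC1alphaLinf (α : ℝ) (Ω : Set ℂ) (u : ℕ → ℂ → ℂ) : Prop :=
  (∀ n, ContDiffOn ℝ 1 (u n) Ω) ∧
  ∀ K : Set ℂ, IsCompact K → K ⊆ Ω → ∃ C : ℝ, ∀ n, ∀ z ∈ K, ∀ w ∈ K,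
    ‖fderivWithin ℝ (u n) Ω z - fderivWithin ℝ (u n) Ω w‖ ≤ C * dist z w ^ α

/-- `u ∈ C^{p,α}(Ω; l₁)`. -/
def SeqCpalphaL1 (p : ℕ) (α : ℝ) (Ω : Set ℂ) (u : ℕ → ℂ → ℂ) : Prop :=
  (∀ n, ContDiffOn ℝ p (u n) Ω) ∧
  (∀ i ≤ p, ∀ z ∈ Ω, Summable fun n => ‖iteratedFDerivWithin ℝ i (u n) Ω z‖) ∧
  ∀ K : Set ℂ, IsCompact K → K ⊆ Ω → ∃ C : ℝ, ∀ z ∈ K, ∀ w ∈ K,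
    (∑' n, ‖iteratedFDerivWithin ℝ p (u n) Ω z - iteratedFDerivWithin ℝ p (u n) Ω w‖) ≤
      C * dist z w ^ α

/-- `u ∈ C²(Ω; l∞)`: componentwise `C²` with second derivatives bounded uniformly in the
component on compact subsets of `Ω`. -/
def SeqC2Linf (Ω : Set ℂ) (u : ℕ → ℂ → ℂ) : Prop :=
  (∀ n, ContDiffOn ℝ 2 (u n) Ω) ∧
  ∀ K : Set ℂ, IsCompact K → K ⊆ Ω → ∃ C : ℝ, ∀ n, ∀ z ∈ K,
    ‖iteratedFDerivWithin ℝ 2 (u n) Ω z‖ ≤ C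

/-- `u ∈ C¹(Ω; l₁)`. -/
def SeqC1L1 (Ω : Set ℂ) (u : ℕ → ℂ → ℂ) : Prop :=
  (∀ n, ContDiffOn ℝ 1 (u n) Ω) ∧
  (∀ z ∈ Ω, Summable fun n => ‖u n z‖) ∧
  ∀ z ∈ Ω, Summable fun n => ‖fderiv ℝ (u n) z‖

lemma slice_eq_Ioo {s : Set ℝ} (ho : IsOpen s) (hc : Convex ℝ s)
    (hb : Bornology.IsBounded s) (hne : s.Nonempty) :
    ∃ a b : ℝ, a < b ∧ s = Ioo a b := by
  have hba : BddAbove s := hb.bddAbove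
  have hbb : BddBelow s := hb.bddBelow
  set a := sInf s
  set b := sSup s
  have has : a ∉ s := by
    intro h
    rcases Metric.isOpen_iff.1 ho a h with ⟨ε, hε, hball⟩
    have : a - ε / 2 ∈ s := by
      apply hball
      simp only [mem_ball, Real.dist_eq]
      rw [_root_.abs_of_nonpos (by linarith)]
      linarith
    exact absurd (csInf_le hbb this) (by linarith [half_pos hε])
  have hbs : b ∉ s := by
    intro h
    rcases Metric.isOpen_iff.1 ho b h with ⟨ε, hε, hball⟩
    have : b + ε / 2 ∈ s := by
      apply hball
      simp only [mem_ball, Real.dist_eq]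
      rw [_root_.abs_of_nonneg (by linarith)]
      linarith
    exact absurd (le_csSup hba this) (by linarith [half_pos hε])
  have hsub : s ⊆ Ioo a b := by
    intro x hx
    rcases (csInf_le hbb hx).lt_or_eq with h | h
    · rcases (le_csSup hba hx).lt_or_eq with h2 | h2
      · exact ⟨h, h2⟩
      · rw [h2] at hx; exact absurd hx hbs
    · rw [← h] at hx; exact absurd hx has
  have hsup : Ioo a b ⊆ s := by
    intro x hx
    obtain ⟨u, hu, hux⟩ := (lt_csSup_iff hba hne).1 hx.2
    obtain ⟨v, hv, hvx⟩ := (csInf_lt_iff hbb hne).1 hx.1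
    exact hc.ordConnected.out hv hu ⟨hvx.le, hux.le⟩
  obtain ⟨x, hx⟩ := hne
  exact ⟨a, b, (hsub hx).1.trans (hsub hx).2, Subset.antisymm hsub hsup⟩


lemma core_x (T W : Set (ℝ × ℝ)) (hTo : IsOpen T) (hTc : Convex ℝ T)
    (hWo : IsOpen W) (hTW : closure T ⊆ W)
    (f : ℝ × ℝ → ℂ) (f' : ℝ × ℝ → ((ℝ × ℝ) →L[ℝ] ℂ))
    (hfd : ∀ p ∈ W, HasFDerivAt f (f' p) p) (hf'c : ContinuousOn f' W)
    (R M : ℝ) (hM0 : 0 ≤ M) (hR0 : 0 ≤ R)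
    (hTR : ∀ p ∈ T, |p.1| ≤ R ∧ |p.2| ≤ R)
    (hM : ∀ p ∈ frontier T, ‖f p‖ ≤ M) :
    ‖∫ p in T, f' p (1, 0)‖ ≤ 2 * M * (2 * R) := by
  classical
  set g : ℝ × ℝ → ℂ := fun p => f' p (1, 0) with hg
  have hmeasT : MeasurableSet T := hTo.measurableSet
  -- compactness of closure T
  have hTsub : T ⊆ Icc (-R, -R) (R, R) := by
    intro p hp
    obtain ⟨h1, h2⟩ := hTR p hp
    constructor
    · exact ⟨neg_le_of_abs_le h1, neg_le_of_abs_le h2⟩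
    · exact ⟨le_of_abs_le h1, le_of_abs_le h2⟩
  have hclT : closure T ⊆ Icc (-R, -R) (R, R) := closure_minimal hTsub isClosed_Icc
  have hcpt : IsCompact (closure T) := (isCompact_Icc).of_isClosed_subset isClosed_closure hclT
  have hgc : ContinuousOn g W := hf'c.clm_apply continuousOn_const
  have hint : IntegrableOn g T := ((hgc.mono hTW).integrableOn_compact hcpt).mono_set subset_closure
  have hGint : Integrable (T.indicator g) (volume : Measure (ℝ × ℝ)) :=
    (integrable_indicator_iff hmeasT).2 hint
  have h1 : ∫ p in T, g p = ∫ p, T.indicator g p := (integral_indicator hmeasT).symm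
  have h2 : ∫ p, T.indicator g p = ∫ y : ℝ, ∫ x : ℝ, T.indicator g (x, y) := by
    rw [Measure.volume_eq_prod] at hGint ⊢
    exact integral_prod_symm _ hGint
  -- key slice bound
  have key : ∀ y : ℝ, ‖∫ x : ℝ, T.indicator g (x, y)‖ ≤
      (Icc (-R) R).indicator (fun _ => 2 * M) y := by
    intro y
    set s : Set ℝ := {x : ℝ | (x, y) ∈ T} with hs_def
    have hcont_xy : Continuous (fun x : ℝ => (x, y)) := continuous_id.prodMk continuous_const
    have hso : IsOpen s := hTo.preimage hcont_xy
    have hindic : ∀ x : ℝ, T.indicator g (x, y) = s.indicator (fun x => g (x, y)) x := by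
      intro x
      by_cases hx : x ∈ s
      · rw [Set.indicator_of_mem hx, Set.indicator_of_mem (by exact hx)]
      · rw [Set.indicator_of_notMem hx, Set.indicator_of_notMem (by exact hx)]
    have hrw : (∫ x : ℝ, T.indicator g (x, y)) = ∫ x in s, g (x, y) := by
      simp_rw [hindic]
      exact integral_indicator hso.measurableSet
    rw [hrw]
    by_cases hne : s.Nonempty
    · -- slice is an interval
      have hsc : Convex ℝ s := by
        intro x₁ h₁ x₂ h₂ a b ha hb hab
        have := hTc h₁ h₂ ha hb hab
        have heq : a • ((x₁ : ℝ), y) + b • (x₂, y) = (a • x₁ + b • x₂, y) := by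
          ext
          · simp [smul_eq_mul]
          · simp only [Prod.smul_snd, Prod.snd_add, smul_eq_mul]
            linear_combination y * hab
        rwa [heq] at this
      have hsb : Bornology.IsBounded s := by
        apply Bornology.IsBounded.subset (Metric.isBounded_Icc (-R) R)
        intro x hx
        exact ⟨neg_le_of_abs_le (hTR _ hx).1, le_of_abs_le (hTR _ hx).1⟩
      obtain ⟨a, b, hab, hsIoo⟩ := slice_eq_Ioo hso hsc hsb hne
      have hclos : closure s ⊆ {x : ℝ | (x, y) ∈ closure T} :=
        hcont_xy.closure_preimage_subset T
      have hIccW : ∀ x ∈ Icc a b, (x, y) ∈ closure T := by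
        intro x hx
        apply hclos
        rw [hsIoo, closure_Ioo hab.ne]
        exact hx
      -- FTC
      have hftc : (∫ x in s, g (x, y)) = f (b, y) - f (a, y) := by
        rw [hsIoo, ← integral_Ioc_eq_integral_Ioo, ← intervalIntegral.integral_of_le hab.le]
        apply intervalIntegral.integral_eq_sub_of_hasDerivAt
        · intro x hx
          rw [uIcc_of_le hab.le] at hx
          have hxy : (x, y) ∈ W := hTW (hIccW x hx)
          exact (hfd _ hxy).comp_hasDerivAt x ((hasDerivAt_id x).prodMk (hasDerivAt_const x y))
        · apply ContinuousOn.intervalIntegrable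
          rw [uIcc_of_le hab.le]
          exact hgc.comp hcont_xy.continuousOn (fun x hx => hTW (hIccW x hx))
      -- endpoints in frontier
      have hfr : ∀ c : ℝ, c ∈ Icc a b → c ∉ s → (c, y) ∈ frontier T := by
        intro c hc hcs
        rw [frontier, hTo.interior_eq]
        exact ⟨hIccW c hc, hcs⟩
      have ha_fr : (a, y) ∈ frontier T :=
        hfr a ⟨le_refl a, hab.le⟩ (by rw [hsIoo]; exact fun h => (lt_irrefl a h.1))
      have hb_fr : (b, y) ∈ frontier T :=
        hfr b ⟨hab.le, le_refl b⟩ (by rw [hsIoo]; exact fun h => (lt_irrefl b h.2))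
      -- y in range
      have hyIcc : y ∈ Icc (-R) R := by
        have hmid : (a + b) / 2 ∈ s := by rw [hsIoo]; constructor <;> linarith
        have := (hTR _ hmid).2
        exact ⟨neg_le_of_abs_le this, le_of_abs_le this⟩
      rw [Set.indicator_of_mem hyIcc, hftc]
      calc ‖f (b, y) - f (a, y)‖ ≤ ‖f (b, y)‖ + ‖f (a, y)‖ := norm_sub_le _ _
        _ ≤ M + M := add_le_add (hM _ hb_fr) (hM _ ha_fr)
        _ = 2 * M := by ring
    · rw [Set.not_nonempty_iff_eq_empty] at hne
      rw [hne]
      simp only [Measure.restrict_empty, integral_zero_measure, norm_zero]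
      exact Set.indicator_apply_nonneg (fun _ => by linarith)
  -- conclude
  rw [hg] at h1 ⊢
  rw [h1, h2]
  calc ‖∫ y : ℝ, ∫ x : ℝ, T.indicator g (x, y)‖
      ≤ ∫ y : ℝ, ‖∫ x : ℝ, T.indicator g (x, y)‖ := norm_integral_le_integral_norm _
    _ ≤ ∫ y : ℝ, (Icc (-R) R).indicator (fun _ => 2 * M) y := by
        apply integral_mono_of_nonneg
        · exact Eventually.of_forall fun y => norm_nonneg _
        · exact (integrable_indicator_iff measurableSet_Icc).2
            (integrableOn_const measure_Icc_lt_top.ne)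
        · exact Eventually.of_forall key
    _ = 2 * M * (2 * R) := by
        rw [integral_indicator_const _ measurableSet_Icc]
        rw [Real.volume_real_Icc, smul_eq_mul, max_eq_left (by linarith)]
        ring


lemma core_y (T W : Set (ℝ × ℝ)) (hTo : IsOpen T) (hTc : Convex ℝ T)
    (hWo : IsOpen W) (hTW : closure T ⊆ W)
    (f : ℝ × ℝ → ℂ) (f' : ℝ × ℝ → ((ℝ × ℝ) →L[ℝ] ℂ))
    (hfd : ∀ p ∈ W, HasFDerivAt f (f' p) p) (hf'c : ContinuousOn f' W)
    (R M : ℝ) (hM0 : 0 ≤ M) (hR0 : 0 ≤ R)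
    (hTR : ∀ p ∈ T, |p.1| ≤ R ∧ |p.2| ≤ R)
    (hM : ∀ p ∈ frontier T, ‖f p‖ ≤ M) :
    ‖∫ p in T, f' p (0, 1)‖ ≤ 2 * M * (2 * R) := by
  classical
  set σh : (ℝ × ℝ) ≃ₜ (ℝ × ℝ) := Homeomorph.prodComm ℝ ℝ with hσh
  have hσ : ⇑σh = Prod.swap := rfl
  set σL : (ℝ × ℝ) →L[ℝ] (ℝ × ℝ) := ((ContinuousLinearEquiv.prodComm ℝ ℝ ℝ : (ℝ × ℝ) ≃L[ℝ] (ℝ × ℝ)) : (ℝ × ℝ) →L[ℝ] (ℝ × ℝ)) with hσL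
  have hσLfun : ⇑σL = Prod.swap := rfl
  set T' : Set (ℝ × ℝ) := Prod.swap ⁻¹' T with hT'
  set W' : Set (ℝ × ℝ) := Prod.swap ⁻¹' W with hW'
  have hT'o : IsOpen T' := hTo.preimage continuous_swap
  have hT'c : Convex ℝ T' := by
    intro p hp q hq a b ha hb hab
    have := hTc hp hq ha hb hab
    simpa [T', Prod.swap, Prod.smul_def] using this
  have hclT' : closure T' ⊆ W' := by
    rw [hT', hW', ← hσ, ← σh.preimage_closure]
    exact Set.preimage_mono hTW
  have hW'o : IsOpen W' := hWo.preimage continuous_swap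
  set g : ℝ × ℝ → ℂ := f ∘ Prod.swap with hgdef
  set g' : ℝ × ℝ → ((ℝ × ℝ) →L[ℝ] ℂ) := fun q => (f' q.swap).comp σL with hg'
  have hgd : ∀ q ∈ W', HasFDerivAt g (g' q) q := by
    intro q hq
    exact (hfd q.swap hq).comp q (σL.hasFDerivAt)
  have hg'c : ContinuousOn g' W' := by
    apply ContinuousOn.clm_comp _ continuousOn_const
    exact hf'c.comp continuous_swap.continuousOn (fun q hq => hq)
  have hTR' : ∀ p ∈ T', |p.1| ≤ R ∧ |p.2| ≤ R := by
    intro p hp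
    exact (hTR p.swap hp).symm
  have hM' : ∀ p ∈ frontier T', ‖g p‖ ≤ M := by
    intro p hp
    rw [hT', ← hσ, ← σh.preimage_frontier] at hp
    exact hM p.swap hp
  have hcore := core_x T' W' hT'o hT'c hW'o hclT' g g' hgd hg'c R M hM0 hR0 hTR' hM'
  have hval : ∀ q : ℝ × ℝ, g' q (1, 0) = f' q.swap (0, 1) := fun q => rfl
  have htrans : (∫ q in T', g' q (1, 0)) = ∫ p in T, f' p (0, 1) := by
    simp_rw [hval]
    have hmp : MeasurePreserving (Prod.swap : ℝ × ℝ → ℝ × ℝ)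
        (volume : Measure (ℝ × ℝ)) (volume : Measure (ℝ × ℝ)) := by
      rw [Measure.volume_eq_prod]
      exact Measure.measurePreserving_swap
    exact hmp.setIntegral_preimage_emb
      (MeasurableEquiv.prodComm (α := ℝ) (β := ℝ)).measurableEmbedding (fun p => f' p (0, 1)) T
  rwa [htrans] at hcore


lemma flux (U W : Set ℂ) (hUo : IsOpen U) (hUc : Convex ℝ U)
    (hWo : IsOpen W) (hUW : closure U ⊆ W)
    (V : ℂ → ℂ) (hV : ContDiffOn ℝ 1 V W)
    (R M : ℝ) (hM0 : 0 ≤ M) (hR0 : 0 ≤ R)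
    (hUR : ∀ z ∈ U, ‖z‖ ≤ R)
    (hM : ∀ z ∈ frontier U, ‖V z‖ ≤ M) :
    ‖∫ z in U, fderiv ℝ V z 1‖ ≤ 2 * M * (2 * R) ∧
      ‖∫ z in U, fderiv ℝ V z Complex.I‖ ≤ 2 * M * (2 * R) := by
  classical
  set κE : (ℝ × ℝ) ≃L[ℝ] ℂ := Complex.equivRealProdCLM.symm with hκE
  have hκfun : ⇑(Complex.measurableEquivRealProd.symm) = ⇑κE := by
    funext p
    rw [Complex.measurableEquivRealProd_symm_apply]
    show _ = Complex.equivRealProd.symm p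
    rw [Complex.equivRealProd_symm_apply]
    apply Complex.ext <;> simp
  have hκ10 : κE (1, 0) = 1 := by
    show Complex.equivRealProd.symm (1, 0) = 1
    rw [Complex.equivRealProd_symm_apply]; simp
  have hκ01 : κE (0, 1) = Complex.I := by
    show Complex.equivRealProd.symm (0, 1) = Complex.I
    rw [Complex.equivRealProd_symm_apply]; simp
  have hκre : ∀ p : ℝ × ℝ, (κE p).re = p.1 := by
    intro p
    show (Complex.equivRealProd.symm p).re = p.1
    rw [Complex.equivRealProd_symm_apply]; simp
  have hκim : ∀ p : ℝ × ℝ, (κE p).im = p.2 := by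
    intro p
    show (Complex.equivRealProd.symm p).im = p.2
    rw [Complex.equivRealProd_symm_apply]; simp
  set T : Set (ℝ × ℝ) := ⇑κE ⁻¹' U with hT
  set W' : Set (ℝ × ℝ) := ⇑κE ⁻¹' W with hW'
  have hTo : IsOpen T := hUo.preimage κE.continuous
  have hW'o : IsOpen W' := hWo.preimage κE.continuous
  have hTc : Convex ℝ T := by
    intro p hp q hq a b ha hb hab
    have h2 := hUc hp hq ha hb hab
    have : κE (a • p + b • q) = a • κE p + b • κE q := by
      rw [map_add, _root_.map_smul, _root_.map_smul]
    simpa [T, this] using h2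
  have hκh : ⇑κE = ⇑(κE.toHomeomorph) := rfl
  have hclT : closure T ⊆ W' := by
    rw [hT, hW', hκh, ← κE.toHomeomorph.preimage_closure]
    exact Set.preimage_mono hUW
  have hfrT : frontier T = ⇑κE ⁻¹' frontier U := by
    rw [hT, hκh, ← κE.toHomeomorph.preimage_frontier]
  set f : ℝ × ℝ → ℂ := V ∘ ⇑κE with hf
  set f' : ℝ × ℝ → ((ℝ × ℝ) →L[ℝ] ℂ) := fun p => (fderiv ℝ V (κE p)).comp (κE : (ℝ × ℝ) →L[ℝ] ℂ) with hf'
  have hVd : ∀ z ∈ W, HasFDerivAt V (fderiv ℝ V z) z := by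
    intro z hz
    exact ((hV.differentiableOn one_ne_zero).differentiableAt (hWo.mem_nhds hz)).hasFDerivAt
  have hfd : ∀ p ∈ W', HasFDerivAt f (f' p) p := by
    intro p hp
    exact (hVd (κE p) hp).comp p κE.hasFDerivAt
  have hVc : ContinuousOn (fderiv ℝ V) W := hV.continuousOn_fderiv_of_isOpen hWo le_rfl
  have hf'c : ContinuousOn f' W' := by
    apply ContinuousOn.clm_comp _ continuousOn_const
    exact hVc.comp κE.continuous.continuousOn (fun p hp => hp)
  have hTR : ∀ p ∈ T, |p.1| ≤ R ∧ |p.2| ≤ R := by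
    intro p hp
    have h1 := hUR (κE p) hp
    constructor
    · rw [← hκre p]; exact (Complex.abs_re_le_norm _).trans h1
    · rw [← hκim p]; exact (Complex.abs_im_le_norm _).trans h1
  have hMT : ∀ p ∈ frontier T, ‖f p‖ ≤ M := by
    intro p hp
    rw [hfrT] at hp
    exact hM (κE p) hp
  have hmp : MeasurePreserving (⇑κE) (volume : Measure (ℝ × ℝ)) (volume : Measure ℂ) := by
    rw [← hκfun]
    exact Complex.volume_preserving_equiv_real_prod.symm
  have hemb : MeasurableEmbedding (⇑κE) := by
    rw [← hκfun]
    exact Complex.measurableEquivRealProd.symm.measurableEmbedding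
  constructor
  · have h := core_x T W' hTo hTc hW'o hclT f f' hfd hf'c R M hM0 hR0 hTR hMT
    have hval : ∀ p : ℝ × ℝ, f' p (1, 0) = fderiv ℝ V (κE p) 1 := by
      intro p
      show fderiv ℝ V (κE p) (κE (1, 0)) = _
      rw [hκ10]
    rw [show (∫ p in T, f' p (1, 0)) = ∫ z in U, fderiv ℝ V z 1 by
      simp_rw [hval]
      exact hmp.setIntegral_preimage_emb hemb (fun z => fderiv ℝ V z 1) U] at h
    exact h
  · have h := core_y T W' hTo hTc hW'o hclT f f' hfd hf'c R M hM0 hR0 hTR hMT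
    have hval : ∀ p : ℝ × ℝ, f' p (0, 1) = fderiv ℝ V (κE p) Complex.I := by
      intro p
      show fderiv ℝ V (κE p) (κE (0, 1)) = _
      rw [hκ01]
    rw [show (∫ p in T, f' p (0, 1)) = ∫ z in U, fderiv ℝ V z Complex.I by
      simp_rw [hval]
      exact hmp.setIntegral_preimage_emb hemb (fun z => fderiv ℝ V z Complex.I) U] at h
    exact h


lemma green (Ω : Set ℂ) (hΩo : IsOpen Ω) (hΩb : Bornology.IsBounded Ω)
    (hconv : Convex ℝ Ω) (hne : Ω.Nonempty)
    (V₁ V₂ D : ℂ → ℂ)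
    (h1c : ContinuousOn V₁ (closure Ω)) (h2c : ContinuousOn V₂ (closure Ω))
    (h1d : ContDiffOn ℝ 1 V₁ Ω) (h2d : ContDiffOn ℝ 1 V₂ Ω)
    (hDc : ContinuousOn D (closure Ω))
    (hdiv : ∀ z ∈ Ω, fderiv ℝ V₁ z 1 + fderiv ℝ V₂ z Complex.I = D z)
    (hbd : ∀ z ∈ frontier Ω, V₁ z = 0 ∧ V₂ z = 0) :
    ∫ z in Ω, D z = 0 := by
  classical
  obtain ⟨z₀, hz₀⟩ := hne
  obtain ⟨R₀, hR₀⟩ := hΩb.subset_closedBall 0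
  set R : ℝ := max R₀ 0 with hRdef
  have hR0 : 0 ≤ R := le_max_right _ _
  have hΩR : Ω ⊆ closedBall 0 R := hR₀.trans (closedBall_subset_closedBall (le_max_left _ _))
  have hclR : closure Ω ⊆ closedBall 0 R := closure_minimal hΩR Metric.isClosed_closedBall
  have hcpt : IsCompact (closure Ω) := hΩb.isCompact_closure
  -- the scaling maps
  set r : ℕ → ℝ := fun k => 1 - 1 / ((k : ℝ) + 2) with hrdef
  have hrpos : ∀ k, 0 < r k := by
    intro k
    have h2 : (2:ℝ) ≤ (k : ℝ) + 2 := by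
      have := Nat.cast_nonneg (α := ℝ) k
      linarith
    have : 1 / ((k:ℝ) + 2) ≤ 1 / 2 := by
      apply one_div_le_one_div_of_le <;> linarith
    simp only [hrdef]
    linarith
  have hrlt : ∀ k, r k < 1 := by
    intro k
    have : 0 < 1 / ((k:ℝ) + 2) := by positivity
    simp only [hrdef]; linarith
  have hrmono : Monotone r := by
    intro k l hkl
    simp only [hrdef]
    have : 1 / ((l:ℝ) + 2) ≤ 1 / ((k:ℝ) + 2) := by
      apply one_div_le_one_div_of_le
      · positivity
      · have : (k:ℝ) ≤ (l:ℝ) := Nat.cast_le.2 hkl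
        linarith
    linarith
  set φ : ℝ → ℂ → ℂ := fun t z => z₀ + t • (z - z₀) with hφdef
  set S : ℕ → Set ℂ := fun k => φ (r k) '' Ω with hSdef
  -- membership facts
  have hφmem : ∀ t : ℝ, 0 < t → t < 1 → ∀ w ∈ closure Ω, φ t w ∈ Ω := by
    intro t ht ht1 w hw
    have hcombo := hconv.combo_interior_closure_mem_interior
      (x := z₀) (y := w) (by rwa [hΩo.interior_eq]) hw
      (a := 1 - t) (b := t) (by linarith) ht.le (by ring)
    rw [hΩo.interior_eq] at hcombo
    have : (1 - t) • z₀ + t • w = φ t w := by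
      simp only [hφdef, smul_sub, sub_smul, one_smul]
      ring
    rwa [this] at hcombo
  have hSsubΩ : ∀ k, S k ⊆ Ω := by
    intro k z hz
    obtain ⟨w, hw, rfl⟩ := hz
    exact hφmem _ (hrpos k) (hrlt k) w (subset_closure hw)
  -- homeomorphism structure
  have hHomeo : ∀ t : ℝ, t ≠ 0 → ∃ H : ℂ ≃ₜ ℂ, ⇑H = φ t := by
    intro t ht
    refine ⟨((Homeomorph.subRight z₀).trans (Homeomorph.smulOfNeZero t ht)).trans
      (Homeomorph.addLeft z₀), ?_⟩
    funext z
    rfl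
  have hSopen : ∀ k, IsOpen (S k) := by
    intro k
    obtain ⟨H, hH⟩ := hHomeo (r k) (hrpos k).ne'
    rw [hSdef]
    simp only [← hH]
    exact H.isOpenMap Ω hΩo
  have hSclosure : ∀ k, closure (S k) ⊆ Ω := by
    intro k
    obtain ⟨H, hH⟩ := hHomeo (r k) (hrpos k).ne'
    have : closure (S k) = φ (r k) '' closure Ω := by
      rw [hSdef]
      simp only [← hH]
      exact (H.image_closure Ω).symm
    rw [this]
    rintro z ⟨w, hw, rfl⟩
    exact hφmem _ (hrpos k) (hrlt k) w hw
  have hSfrontier : ∀ k, frontier (S k) = φ (r k) '' frontier Ω := by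
    intro k
    obtain ⟨H, hH⟩ := hHomeo (r k) (hrpos k).ne'
    rw [hSdef]
    simp only [← hH]
    exact (H.image_frontier Ω).symm
  have hSconv : ∀ k, Convex ℝ (S k) := by
    intro k
    have heq : ∀ z, φ (r k) z = AffineMap.homothety z₀ (r k) z := by
      intro z
      rw [AffineMap.homothety_apply]
      simp only [hφdef, vsub_eq_sub, vadd_eq_add]
      ring
    have : S k = ⇑(AffineMap.homothety z₀ (r k)) '' Ω := by
      rw [hSdef]
      exact Set.image_congr fun z _ => heq z
    rw [this]
    exact hconv.affine_image _
  -- monotone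
  have hSmono : Monotone S := by
    intro k l hkl
    rintro z ⟨w, hw, rfl⟩
    have hrk := hrpos k
    have hrl := hrpos l
    have hle : r k ≤ r l := hrmono hkl
    set t : ℝ := r k / r l with htdef
    have ht0 : 0 ≤ t := by positivity
    have ht1 : t ≤ 1 := by
      rw [htdef, div_le_one hrl]
      exact hle
    have h1 : z₀ ∈ S l := ⟨z₀, hz₀, by simp [hφdef]⟩
    have h2 : φ (r l) w ∈ S l := ⟨w, hw, rfl⟩
    have := (hSconv l) h1 h2 (by linarith : (0:ℝ) ≤ 1 - t) ht0 (by ring)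
    have heq : (1 - t) • z₀ + t • (φ (r l) w) = φ (r k) w := by
      simp only [hφdef, smul_add, smul_sub, sub_smul, one_smul, smul_smul]
      have : t * r l = r k := by
        rw [htdef, div_mul_cancel₀]
        exact hrl.ne'
      rw [this]
      ring
    rwa [heq] at this
  -- union
  have hSunion : (⋃ k, S k) = Ω := by
    apply Subset.antisymm
    · exact Set.iUnion_subset hSsubΩ
    · intro w hw
      have htend : Tendsto (fun k : ℕ => z₀ + (r k)⁻¹ • (w - z₀)) atTop (𝓝 w) := by
        have h1 : Tendsto (fun k : ℕ => ((k : ℝ) + 2)) atTop atTop :=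
          tendsto_atTop_add_const_right _ 2 tendsto_natCast_atTop_atTop
        have h2 : Tendsto (fun k : ℕ => 1 / ((k : ℝ) + 2)) atTop (𝓝 0) := by
          simpa [Pi.inv_def] using h1.inv_tendsto_atTop
        have h3 : Tendsto r atTop (𝓝 1) := by
          have h3' := Tendsto.sub
            (tendsto_const_nhds : Tendsto (fun _ : ℕ => (1:ℝ)) atTop (𝓝 1)) h2
          simpa [hrdef] using h3'
        have h4 : Tendsto (fun k => (r k)⁻¹) atTop (𝓝 1) := by
          simpa using h3.inv₀ one_ne_zero
        have h5 : Tendsto (fun k => (r k)⁻¹ • (w - z₀)) atTop (𝓝 ((1:ℝ) • (w - z₀))) :=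
          h4.smul_const _
        rw [one_smul] at h5
        have h6 := Tendsto.add
          (tendsto_const_nhds : Tendsto (fun _ : ℕ => z₀) atTop (𝓝 z₀)) h5
        simpa using h6
      have hev : ∀ᶠ k in atTop, z₀ + (r k)⁻¹ • (w - z₀) ∈ Ω :=
        htend.eventually (hΩo.mem_nhds hw)
      obtain ⟨k, hk⟩ := hev.exists
      refine Set.mem_iUnion.2 ⟨k, z₀ + (r k)⁻¹ • (w - z₀), hk, ?_⟩
      simp only [hφdef]
      rw [add_sub_cancel_left, smul_smul, mul_inv_cancel₀ (hrpos k).ne', one_smul]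
      rw [add_sub_cancel]
  -- integrability
  have hDint : IntegrableOn D Ω := (hDc.integrableOn_compact hcpt).mono_set subset_closure
  -- (A) convergence to the full integral
  have hA : Tendsto (fun k => ∫ z in S k, D z) atTop (𝓝 (∫ z in Ω, D z)) := by
    have := tendsto_setIntegral_of_monotone (fun k => (hSopen k).measurableSet) hSmono
      (by rwa [hSunion])
    rwa [hSunion] at this
  -- (B) convergence to zero
  have hB : Tendsto (fun k => ∫ z in S k, D z) atTop (𝓝 0) := by
    rw [NormedAddCommGroup.tendsto_nhds_zero]
    intro ε hε
    set ε' : ℝ := ε / (16 * R + 1) with hε'def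
    have hε'pos : 0 < ε' := by
      apply div_pos hε
      linarith
    have h8 : 8 * R * ε' + 8 * R * ε' < ε := by
      rw [hε'def]
      rw [div_eq_inv_mul]
      have h16 : (0:ℝ) < 16 * R + 1 := by linarith
      rw [show 8 * R * ((16 * R + 1)⁻¹ * ε) + 8 * R * ((16 * R + 1)⁻¹ * ε)
        = (16 * R) * ((16 * R + 1)⁻¹ * ε) by ring]
      calc (16 * R) * ((16 * R + 1)⁻¹ * ε) < (16 * R + 1) * ((16 * R + 1)⁻¹ * ε) := by
            apply mul_lt_mul_of_pos_right (by linarith)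
            positivity
        _ = ε := by field_simp
    -- uniform continuity
    have hu1 := (hcpt.uniformContinuousOn_of_continuous h1c)
    have hu2 := (hcpt.uniformContinuousOn_of_continuous h2c)
    rw [Metric.uniformContinuousOn_iff] at hu1 hu2
    obtain ⟨δ₁, hδ₁, hu1⟩ := hu1 ε' hε'pos
    obtain ⟨δ₂, hδ₂, hu2⟩ := hu2 ε' hε'pos
    set δ := min δ₁ δ₂ with hδdef
    have hδpos : 0 < δ := lt_min hδ₁ hδ₂
    obtain ⟨N, hN⟩ := exists_nat_gt (2 * R / δ)
    rw [eventually_atTop]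
    refine ⟨N, fun k hk => ?_⟩
    -- frontier estimate
    have hfr : ∀ w ∈ frontier (S k), ‖V₁ w‖ ≤ ε' ∧ ‖V₂ w‖ ≤ ε' := by
      intro w hw
      rw [hSfrontier k] at hw
      obtain ⟨ζ, hζ, rfl⟩ := hw
      have hζcl : ζ ∈ closure Ω := by
        have := frontier_subset_closure (s := Ω)
        exact this hζ
      have hwΩ : φ (r k) ζ ∈ Ω := hφmem _ (hrpos k) (hrlt k) ζ hζcl
      have hwcl : φ (r k) ζ ∈ closure Ω := subset_closure hwΩ
      have hdist : dist (φ (r k) ζ) ζ < δ := by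
        have heq : φ (r k) ζ - ζ = (1 - r k) • (z₀ - ζ) := by
          simp only [hφdef, smul_sub, sub_smul, one_smul]
          ring
        rw [dist_eq_norm, heq, norm_smul]
        have h1 : ‖z₀ - ζ‖ ≤ 2 * R := by
          have ha : ‖z₀‖ ≤ R := by
            have := hΩR hz₀
            rwa [mem_closedBall_zero_iff] at this
          have hb : ‖ζ‖ ≤ R := by
            have := hclR hζcl
            rwa [mem_closedBall_zero_iff] at this
          calc ‖z₀ - ζ‖ ≤ ‖z₀‖ + ‖ζ‖ := norm_sub_le _ _
            _ ≤ 2 * R := by linarith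
        have h2 : ‖(1 - r k : ℝ)‖ = 1 / ((k:ℝ) + 2) := by
          rw [hrdef]
          simp only [sub_sub_cancel]
          rw [Real.norm_eq_abs, abs_of_pos (by positivity)]
        rw [h2]
        have h3 : 1 / ((k:ℝ) + 2) ≤ 1 / ((N:ℝ) + 2) := by
          apply one_div_le_one_div_of_le
          · positivity
          · have : (N:ℝ) ≤ (k:ℝ) := Nat.cast_le.2 hk
            linarith
        have h4 : 1 / ((N:ℝ) + 2) * (2 * R) < δ := by
          rw [div_mul_eq_mul_div, one_mul, div_lt_iff₀ (by positivity)]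
          have h5 : 2 * R / δ < (N:ℝ) := hN
          rw [div_lt_iff₀ hδpos] at h5
          calc 2 * R < (N:ℝ) * δ := h5
            _ ≤ δ * ((N:ℝ) + 2) := by nlinarith [hδpos.le]
        calc 1 / ((k:ℝ) + 2) * ‖z₀ - ζ‖ ≤ 1 / ((N:ℝ) + 2) * (2 * R) := by
              apply mul_le_mul h3 h1 (norm_nonneg _) (by positivity)
          _ < δ := h4
      obtain ⟨hb1, hb2⟩ := hbd ζ hζ
      constructor
      · have := hu1 _ hwcl _ hζcl (lt_of_lt_of_le hdist (min_le_left _ _))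
        rw [dist_eq_norm, hb1, sub_zero] at this
        exact this.le
      · have := hu2 _ hwcl _ hζcl (lt_of_lt_of_le hdist (min_le_right _ _))
        rw [dist_eq_norm, hb2, sub_zero] at this
        exact this.le
    -- flux bounds
    have hflux1 := flux (S k) Ω (hSopen k) (hSconv k) hΩo (hSclosure k) V₁ h1d
      R ε' hε'pos.le hR0 (fun z hz => by
        have := hΩR (hSsubΩ k hz)
        rwa [mem_closedBall_zero_iff] at this)
      (fun z hz => (hfr z hz).1)
    have hflux2 := flux (S k) Ω (hSopen k) (hSconv k) hΩo (hSclosure k) V₂ h2d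
      R ε' hε'pos.le hR0 (fun z hz => by
        have := hΩR (hSsubΩ k hz)
        rwa [mem_closedBall_zero_iff] at this)
      (fun z hz => (hfr z hz).2)
    -- combine
    have hcptS : IsCompact (closure (S k)) := (hΩb.subset (hSsubΩ k)).isCompact_closure
    have hI1 : IntegrableOn (fun z => fderiv ℝ V₁ z 1) (S k) := by
      have hc : ContinuousOn (fun z => fderiv ℝ V₁ z 1) Ω :=
        (h1d.continuousOn_fderiv_of_isOpen hΩo le_rfl).clm_apply continuousOn_const
      exact ((hc.mono (hSclosure k)).integrableOn_compact hcptS).mono_set subset_closure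
    have hI2 : IntegrableOn (fun z => fderiv ℝ V₂ z Complex.I) (S k) := by
      have hc : ContinuousOn (fun z => fderiv ℝ V₂ z Complex.I) Ω :=
        (h2d.continuousOn_fderiv_of_isOpen hΩo le_rfl).clm_apply continuousOn_const
      exact ((hc.mono (hSclosure k)).integrableOn_compact hcptS).mono_set subset_closure
    have hEq : (∫ z in S k, D z) =
        (∫ z in S k, fderiv ℝ V₁ z 1) + ∫ z in S k, fderiv ℝ V₂ z Complex.I := by
      rw [← integral_add hI1 hI2]
      apply setIntegral_congr_fun (hSopen k).measurableSet
      intro z hz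
      exact (hdiv z (hSsubΩ k hz)).symm
    rw [hEq]
    calc ‖(∫ z in S k, fderiv ℝ V₁ z 1) + ∫ z in S k, fderiv ℝ V₂ z Complex.I‖
        ≤ ‖∫ z in S k, fderiv ℝ V₁ z 1‖ + ‖∫ z in S k, fderiv ℝ V₂ z Complex.I‖ :=
          norm_add_le _ _
      _ ≤ 2 * ε' * (2 * R) + 2 * ε' * (2 * R) := add_le_add hflux1.1 hflux2.2
      _ < ε := by nlinarith [h8, mul_nonneg (mul_nonneg (by norm_num : (0:ℝ) ≤ 2) hε'pos.le) (mul_nonneg (by norm_num : (0:ℝ) ≤ 2) hR0)]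
  exact tendsto_nhds_unique hA hB


lemma hasFDerivAt_monomial (a b : ℕ) (z : ℂ) :
    ∃ L : ℂ →L[ℝ] ℂ,
      HasFDerivAt (fun w : ℂ => (starRingEnd ℂ w) ^ a * w ^ b) L z ∧
      L 1 = (b : ℂ) * (starRingEnd ℂ z) ^ a * z ^ (b - 1)
        + (a : ℂ) * (starRingEnd ℂ z) ^ (a - 1) * z ^ b ∧
      L Complex.I = Complex.I * ((b : ℂ) * (starRingEnd ℂ z) ^ a * z ^ (b - 1)
        - (a : ℂ) * (starRingEnd ℂ z) ^ (a - 1) * z ^ b) := by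
  classical
  -- derivative of w ↦ w ^ b  (real restriction)
  have hq : HasFDerivAt (fun w : ℂ => w ^ b)
      (((1 : ℂ →L[ℂ] ℂ).smulRight ((b : ℂ) * z ^ (b - 1))).restrictScalars ℝ) z :=
    ((hasDerivAt_pow b z).hasFDerivAt).restrictScalars ℝ
  -- derivative of w ↦ (conj w) ^ a
  have hconj : HasFDerivAt (fun w : ℂ => starRingEnd ℂ w)
      (Complex.conjCLE.toContinuousLinearMap) z := Complex.conjCLE.toContinuousLinearMap.hasFDerivAt
  have hpow : HasFDerivAt (fun w : ℂ => w ^ a)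
      (((1 : ℂ →L[ℂ] ℂ).smulRight ((a : ℂ) * (starRingEnd ℂ z) ^ (a - 1))).restrictScalars ℝ)
      (starRingEnd ℂ z) :=
    ((hasDerivAt_pow a (starRingEnd ℂ z)).hasFDerivAt).restrictScalars ℝ
  have hr : HasFDerivAt (fun w : ℂ => (starRingEnd ℂ w) ^ a)
      ((((1 : ℂ →L[ℂ] ℂ).smulRight ((a : ℂ) * (starRingEnd ℂ z) ^ (a - 1))).restrictScalars ℝ).comp
        Complex.conjCLE.toContinuousLinearMap) z := hpow.comp z hconj
  have hmul := hr.mul hq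
  refine ⟨_, hmul, ?_, ?_⟩
  · simp only [ContinuousLinearMap.add_apply, ContinuousLinearMap.smul_apply,
      ContinuousLinearMap.coe_restrictScalars', ContinuousLinearMap.comp_apply,
      ContinuousLinearMap.smulRight_apply, ContinuousLinearMap.one_apply,
      ContinuousLinearEquiv.coe_coe, Complex.conjCLE_apply, map_one, smul_eq_mul]
    ring
  · simp only [ContinuousLinearMap.add_apply, ContinuousLinearMap.smul_apply,
      ContinuousLinearMap.coe_restrictScalars', ContinuousLinearMap.comp_apply,
      ContinuousLinearMap.smulRight_apply, ContinuousLinearMap.one_apply,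
      ContinuousLinearEquiv.coe_coe, Complex.conjCLE_apply, Complex.conj_I, smul_eq_mul]
    ring


lemma moment_key (Ω : Set ℂ) (hΩo : IsOpen Ω) (hΩb : Bornology.IsBounded Ω)
    (hconv : Convex ℝ Ω) (hne : Ω.Nonempty)
    (c1 c2 : ℂ → ℂ)
    (h1c : ContinuousOn c1 (closure Ω)) (h2c : ContinuousOn c2 (closure Ω))
    (h1d : ContDiffOn ℝ 1 c1 Ω) (h2d : ContDiffOn ℝ 1 c2 Ω)
    (hchain : ∀ z ∈ Ω, fderiv ℝ c1 z 1 - Complex.I * fderiv ℝ c1 z Complex.I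
        + (fderiv ℝ c2 z 1 + Complex.I * fderiv ℝ c2 z Complex.I) = 0)
    (hbd : ∀ z ∈ frontier Ω, c1 z = 0 ∧ c2 z = 0)
    (a b : ℕ) :
    (b : ℂ) * (∫ z in Ω, c1 z * (starRingEnd ℂ z) ^ a * z ^ (b - 1))
      + (a : ℂ) * (∫ z in Ω, c2 z * (starRingEnd ℂ z) ^ (a - 1) * z ^ b) = 0 := by
  classical
  have hcpt : IsCompact (closure Ω) := hΩb.isCompact_closure
  set p : ℂ → ℂ := fun w => (starRingEnd ℂ w) ^ a * w ^ b with hpdef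
  have hconjCD : ContDiff ℝ 1 (fun w : ℂ => starRingEnd ℂ w) := by
    have := Complex.conjCLE.toContinuousLinearMap.contDiff (n := (1:ℕ∞))
    exact this
  have hpcd : ContDiff ℝ 1 p := (hconjCD.pow a).mul (contDiff_id.pow b)
  set B : ℂ → ℂ := fun z => (b : ℂ) * (starRingEnd ℂ z) ^ a * z ^ (b - 1) with hBdef
  set A : ℂ → ℂ := fun z => (a : ℂ) * (starRingEnd ℂ z) ^ (a - 1) * z ^ b with hAdef
  have hBc : Continuous B := by
    apply Continuous.mul
    · exact continuous_const.mul ((Complex.continuous_conj).pow a)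
    · exact continuous_pow _
  have hAc : Continuous A := by
    apply Continuous.mul
    · exact continuous_const.mul ((Complex.continuous_conj).pow (a-1))
    · exact continuous_pow _
  set V₁ : ℂ → ℂ := fun z => (c1 z + c2 z) * p z with hV₁def
  set V₂ : ℂ → ℂ := fun z => Complex.I * ((c2 z - c1 z) * p z) with hV₂def
  set D : ℂ → ℂ := fun z => 2 * (c1 z * B z) + 2 * (c2 z * A z) with hDdef
  have hgreen : ∫ z in Ω, D z = 0 := by
    apply green Ω hΩo hΩb hconv hne V₁ V₂ D
    · exact (h1c.add h2c).mul hpcd.continuous.continuousOn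
    · exact continuousOn_const.mul ((h2c.sub h1c).mul hpcd.continuous.continuousOn)
    · exact (h1d.add h2d).mul hpcd.contDiffOn
    · exact contDiffOn_const.mul ((h2d.sub h1d).mul hpcd.contDiffOn)
    · apply ContinuousOn.add
      · exact continuousOn_const.mul (h1c.mul hBc.continuousOn)
      · exact continuousOn_const.mul (h2c.mul hAc.continuousOn)
    · intro z hz
      have hd1 : DifferentiableAt ℝ c1 z :=
        (h1d.differentiableOn one_ne_zero).differentiableAt (hΩo.mem_nhds hz)
      have hd2 : DifferentiableAt ℝ c2 z :=
        (h2d.differentiableOn one_ne_zero).differentiableAt (hΩo.mem_nhds hz)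
      obtain ⟨L, hL, hL1, hLI⟩ := hasFDerivAt_monomial a b z
      have hV₁d : HasFDerivAt V₁
          ((c1 z + c2 z) • L + p z • (fderiv ℝ c1 z + fderiv ℝ c2 z)) z :=
        (hd1.hasFDerivAt.add hd2.hasFDerivAt).mul hL
      have hV₂in : HasFDerivAt (fun z => (c2 z - c1 z) * p z)
          ((c2 z - c1 z) • L + p z • (fderiv ℝ c2 z - fderiv ℝ c1 z)) z :=
        (hd2.hasFDerivAt.sub hd1.hasFDerivAt).mul hL
      have hV₂d : HasFDerivAt V₂
          (Complex.I • ((c2 z - c1 z) • L + p z • (fderiv ℝ c2 z - fderiv ℝ c1 z))) z :=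
        hV₂in.const_mul Complex.I
      rw [hV₁d.fderiv, hV₂d.fderiv]
      simp only [ContinuousLinearMap.add_apply, ContinuousLinearMap.smul_apply,
        ContinuousLinearMap.sub_apply, smul_eq_mul, hL1, hLI]
      have hch := hchain z hz
      have hD : D z = 2 * (c1 z * B z) + 2 * (c2 z * A z) := rfl
      rw [hD]
      simp only [hBdef, hAdef]
      linear_combination (p z) * hch
        + ((c2 z - c1 z) * ((b : ℂ) * (starRingEnd ℂ z) ^ a * z ^ (b - 1)
            - (a : ℂ) * (starRingEnd ℂ z) ^ (a - 1) * z ^ b)) * Complex.I_mul_I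
    · intro z hz
      obtain ⟨e1, e2⟩ := hbd z hz
      constructor
      · simp [hV₁def, e1, e2]
      · simp [hV₂def, e1, e2]
  -- expand the integral of D
  have hI1 : IntegrableOn (fun z => c1 z * B z) Ω :=
    ((h1c.mul hBc.continuousOn).integrableOn_compact hcpt).mono_set subset_closure
  have hI2 : IntegrableOn (fun z => c2 z * A z) Ω :=
    ((h2c.mul hAc.continuousOn).integrableOn_compact hcpt).mono_set subset_closure
  have hsplit : (∫ z in Ω, D z) =
      2 * (∫ z in Ω, c1 z * B z) + 2 * (∫ z in Ω, c2 z * A z) := by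
    rw [hDdef]
    rw [integral_add (hI1.const_mul 2) (hI2.const_mul 2)]
    rw [integral_const_mul, integral_const_mul]
  rw [hsplit] at hgreen
  have hM1 : (∫ z in Ω, c1 z * B z)
      = (b:ℂ) * ∫ z in Ω, c1 z * (starRingEnd ℂ z) ^ a * z ^ (b - 1) := by
    rw [← integral_const_mul]
    apply setIntegral_congr_fun hΩo.measurableSet
    intro z hz
    simp only [hBdef]
    ring
  have hM2 : (∫ z in Ω, c2 z * A z)
      = (a:ℂ) * ∫ z in Ω, c2 z * (starRingEnd ℂ z) ^ (a - 1) * z ^ b := by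
    rw [← integral_const_mul]
    apply setIntegral_congr_fun hΩo.measurableSet
    intro z hz
    simp only [hAdef]
    ring
  rw [hM1, hM2] at hgreen
  have h2 : (2:ℂ) ≠ 0 := two_ne_zero
  have := mul_eq_zero.mp (by linear_combination hgreen :
    (2:ℂ) * ((b : ℂ) * (∫ z in Ω, c1 z * (starRingEnd ℂ z) ^ a * z ^ (b - 1))
      + (a : ℂ) * (∫ z in Ω, c2 z * (starRingEnd ℂ z) ^ (a - 1) * z ^ b)) = 0)
  exact this.resolve_left h2


lemma vanish_of_moments (Ω : Set ℂ) (hΩo : IsOpen Ω) (hΩb : Bornology.IsBounded Ω)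
    (f : ℂ → ℂ) (hfc : ContinuousOn f (closure Ω))
    (hmom : ∀ a b : ℕ, (∫ z in Ω, f z * (starRingEnd ℂ z) ^ a * z ^ b) = 0) :
    ∀ z ∈ Ω, f z = 0 := by
  classical
  set K : Set ℂ := closure Ω with hKdef
  have hcpt : IsCompact K := hΩb.isCompact_closure
  haveI : CompactSpace K := isCompact_iff_compactSpace.mp hcpt
  -- the coordinate function
  set X : C(K, ℂ) := ⟨fun w => (w : ℂ), continuous_subtype_val⟩ with hXdef
  set Mset : Set C(K, ℂ) := {g | ∃ a b : ℕ, g = (star X) ^ a * X ^ b} with hMdef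
  set Msub : Submodule ℂ C(K, ℂ) := Submodule.span ℂ Mset with hMsubdef
  have hone : (1 : C(K, ℂ)) ∈ Msub := Submodule.subset_span ⟨0, 0, by simp⟩
  have hMmul : ∀ g ∈ Mset, ∀ h ∈ Mset, g * h ∈ Mset := by
    rintro g ⟨a, b, rfl⟩ h ⟨a', b', rfl⟩
    exact ⟨a + a', b + b', by rw [pow_add, pow_add]; ring⟩
  have hmul : ∀ g h : C(K, ℂ), g ∈ Msub → h ∈ Msub → g * h ∈ Msub := by
    intro g h hg hh
    have := Submodule.mul_mem_mul hg hh
    rw [Submodule.span_mul_span] at this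
    refine Submodule.span_le.2 ?_ this
    rintro x hx
    rw [Set.mem_mul] at hx
    obtain ⟨g', hg', h', hh', rfl⟩ := hx
    exact Submodule.subset_span (hMmul g' hg' h' hh')
  have hstar : ∀ g : C(K, ℂ), g ∈ Msub → star g ∈ Msub := by
    intro g hg
    refine Submodule.span_induction ?_ ?_ ?_ ?_ hg
    · rintro x ⟨a, b, rfl⟩
      apply Submodule.subset_span
      refine ⟨b, a, ?_⟩
      rw [star_mul', star_pow, star_pow, star_star]
      ring
    · simp only [star_zero]; exact Msub.zero_mem
    · intro x y _ _ hx hy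
      rw [star_add]; exact Msub.add_mem hx hy
    · intro c x _ hx
      rw [star_smul]; exact Msub.smul_mem _ hx
  set Balg : Subalgebra ℂ C(K, ℂ) := Msub.toSubalgebra hone hmul with hBalgdef
  set B : StarSubalgebra ℂ C(K, ℂ) := { Balg with star_mem' := fun hg => hstar _ hg } with hBdef
  have hsep : B.SeparatesPoints := by
    intro x y hxy
    refine ⟨X, ⟨X, ?_, rfl⟩, ?_⟩
    · show X ∈ B
      apply Submodule.subset_span
      exact ⟨0, 1, by simp⟩
    · simp only [hXdef, ContinuousMap.coe_mk]
      exact fun h => hxy (Subtype.ext h)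
  have htop : B.topologicalClosure = ⊤ :=
    ContinuousMap.starSubalgebra_topologicalClosure_eq_top_of_separatesPoints B hsep
  -- the functional
  set ext : C(K, ℂ) → ℂ → ℂ := fun g z => if hz : z ∈ K then g ⟨z, hz⟩ else 0 with hextdef
  have hextcont : ∀ g : C(K, ℂ), ContinuousOn (ext g) K := by
    intro g
    rw [continuousOn_iff_continuous_restrict]
    have : K.restrict (ext g) = ⇑g := by
      funext x
      simp only [hextdef, Set.restrict_apply, dif_pos x.2, Subtype.coe_eta]
      exact dif_pos x.2
    change Continuous (K.restrict (ext g))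
    rw [this]
    exact g.continuous
  have hextint : ∀ g : C(K, ℂ), IntegrableOn (fun z => f z * ext g z) Ω := by
    intro g
    exact ((hfc.mul (hextcont g)).integrableOn_compact hcpt).mono_set subset_closure
  set Lam : C(K, ℂ) → ℂ := fun g => ∫ z in Ω, f z * ext g z with hLamdef
  have hLam_mono : ∀ a b : ℕ, Lam ((star X) ^ a * X ^ b) = 0 := by
    intro a b
    simp only [hLamdef]
    have : ∀ z ∈ Ω, f z * ext ((star X) ^ a * X ^ b) z
        = f z * (starRingEnd ℂ z) ^ a * z ^ b := by
      intro z hz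
      have hzK : z ∈ K := subset_closure hz
      simp only [hextdef, dif_pos hzK]
      simp only [ContinuousMap.mul_apply, ContinuousMap.pow_apply, ContinuousMap.star_apply,
        hXdef, ContinuousMap.coe_mk, RCLike.star_def]
      ring
    rw [setIntegral_congr_fun hΩo.measurableSet this]
    exact hmom a b
  have hLamB : ∀ g ∈ Msub, Lam g = 0 := by
    intro g hg
    refine Submodule.span_induction ?_ ?_ ?_ ?_ hg
    · rintro x ⟨a, b, rfl⟩
      exact hLam_mono a b
    · simp only [hLamdef]
      have : ∀ z : ℂ, f z * ext 0 z = 0 := by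
        intro z
        simp only [hextdef]
        split <;> simp
      simp only [this, integral_zero]
    · intro x y _ _ hx hy
      have : Lam (x + y) = Lam x + Lam y := by
        simp only [hLamdef]
        rw [← integral_add (hextint x) (hextint y)]
        apply setIntegral_congr_fun hΩo.measurableSet
        intro z hz
        have hzK : z ∈ K := subset_closure hz
        simp only [hextdef, dif_pos hzK, ContinuousMap.add_apply]
        ring
      rw [this, hx, hy, add_zero]
    · intro cc x _ hx
      have : Lam (cc • x) = cc * Lam x := by
        simp only [hLamdef]
        rw [← integral_const_mul]
        apply setIntegral_congr_fun hΩo.measurableSet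
        intro z hz
        have hzK : z ∈ K := subset_closure hz
        simp only [hextdef, dif_pos hzK, ContinuousMap.smul_apply, smul_eq_mul]
        ring
      rw [this, hx, mul_zero]
  -- conclude: the integral of f * conj f vanishes
  have hfK : ContinuousOn (fun z => (starRingEnd ℂ) (f z)) K :=
    Complex.continuous_conj.comp_continuousOn hfc
  set f₀ : C(K, ℂ) := ⟨K.restrict (fun z => (starRingEnd ℂ) (f z)),
    continuousOn_iff_continuous_restrict.mp hfK⟩ with hf₀def
  have hC0 : IntegrableOn (fun z => ‖f z‖) Ω :=
    ((hfc.norm).integrableOn_compact hcpt).mono_set subset_closure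
  set C0 : ℝ := ∫ z in Ω, ‖f z‖ with hC0def
  have hC0nn : 0 ≤ C0 := integral_nonneg (fun z => norm_nonneg _)
  have htarget : ∀ ε > 0, ‖Lam f₀‖ ≤ ε * C0 := by
    intro ε hε
    have hf₀mem : f₀ ∈ closure (B : Set C(K, ℂ)) := by
      have : f₀ ∈ (⊤ : StarSubalgebra ℂ C(K, ℂ)) := trivial
      rw [← htop] at this
      exact this
    obtain ⟨g, hgB, hgdist⟩ := Metric.mem_closure_iff.mp hf₀mem ε hε
    have hgMsub : g ∈ Msub := hgB
    have hdiff : Lam f₀ = Lam f₀ - Lam g := by rw [hLamB g hgMsub, sub_zero]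
    rw [hdiff]
    have hsub : Lam f₀ - Lam g = ∫ z in Ω, f z * (ext f₀ z - ext g z) := by
      simp only [hLamdef]
      rw [← integral_sub (hextint f₀) (hextint g)]
      apply setIntegral_congr_fun hΩo.measurableSet
      intro z hz
      ring
    rw [hsub]
    calc ‖∫ z in Ω, f z * (ext f₀ z - ext g z)‖
        ≤ ∫ z in Ω, ‖f z * (ext f₀ z - ext g z)‖ := norm_integral_le_integral_norm _
      _ ≤ ∫ z in Ω, ε * ‖f z‖ := by
          apply setIntegral_mono_on
          · have h1 : IntegrableOn (fun z => f z * ext f₀ z - f z * ext g z) Ω :=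
              (hextint f₀).sub (hextint g)
            have h2 : IntegrableOn (fun z => f z * (ext f₀ z - ext g z)) Ω :=
              h1.congr_fun (fun z _ => by ring) hΩo.measurableSet
            exact h2.norm
          · exact hC0.const_mul ε
          · exact hΩo.measurableSet
          · intro z hz
            have hzK : z ∈ K := subset_closure hz
            rw [norm_mul]
            have : ‖ext f₀ z - ext g z‖ ≤ ε := by
              simp only [hextdef, dif_pos hzK]
              have := ContinuousMap.dist_apply_le_dist (f := f₀) (g := g) ⟨z, hzK⟩
              rw [dist_eq_norm] at this
              exact this.trans hgdist.le
            calc ‖f z‖ * ‖ext f₀ z - ext g z‖ ≤ ‖f z‖ * ε :=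
                  mul_le_mul_of_nonneg_left this (norm_nonneg _)
              _ = ε * ‖f z‖ := by ring
      _ = ε * C0 := by rw [hC0def, ← integral_const_mul]
  -- hence Lam f₀ = 0
  have hLamf₀ : Lam f₀ = 0 := by
    by_contra hne
    have hpos : 0 < ‖Lam f₀‖ := norm_pos_iff.mpr hne
    have := htarget (‖Lam f₀‖ / (C0 + 1)) (by positivity)
    have hlt : ‖Lam f₀‖ / (C0 + 1) * C0 < ‖Lam f₀‖ := by
      rw [div_mul_eq_mul_div, div_lt_iff₀ (by linarith)]
      nlinarith
    linarith
  -- Lam f₀ is the integral of |f|²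
  have hLamf₀eq : Lam f₀ = ∫ z in Ω, (Complex.normSq (f z) : ℂ) := by
    simp only [hLamdef]
    apply setIntegral_congr_fun hΩo.measurableSet
    intro z hz
    have hzK : z ∈ K := subset_closure hz
    simp only [hextdef, dif_pos hzK, hf₀def, ContinuousMap.coe_mk, Set.restrict_apply]
    show f z * (starRingEnd ℂ) (f z) = _
    rw [Complex.mul_conj]
  -- conclude pointwise vanishing
  have hnsq : (∫ z in Ω, Complex.normSq (f z)) = 0 := by
    have h1 : (∫ z in Ω, (Complex.normSq (f z) : ℂ)) = ((∫ z in Ω, Complex.normSq (f z) : ℝ) : ℂ) := by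
      exact integral_ofReal
    rw [hLamf₀eq, h1] at hLamf₀
    exact_mod_cast hLamf₀
  intro z₀ hz₀
  by_contra hne
  have hv : 0 < Complex.normSq (f z₀) := by
    rwa [Complex.normSq_pos]
  have hcontAt : ContinuousAt (fun z => Complex.normSq (f z)) z₀ := by
    have : ContinuousOn (fun z => Complex.normSq (f z)) Ω :=
      Complex.continuous_normSq.comp_continuousOn (hfc.mono subset_closure)
    exact this.continuousAt (hΩo.mem_nhds hz₀)
  have hev : ∀ᶠ z in 𝓝 z₀, Complex.normSq (f z₀) / 2 < Complex.normSq (f z) :=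
    hcontAt.eventually (lt_mem_nhds (by linarith))
  have hevΩ : ∀ᶠ z in 𝓝 z₀, z ∈ Ω := hΩo.eventually_mem hz₀
  obtain ⟨ε, hεpos, hball⟩ := Metric.eventually_nhds_iff.mp (hev.and hevΩ)
  have hintsq : IntegrableOn (fun z => Complex.normSq (f z)) Ω :=
    ((Complex.continuous_normSq.comp_continuousOn hfc).integrableOn_compact hcpt).mono_set
      subset_closure
  have hballΩ : ball z₀ ε ⊆ Ω := fun w hw => (hball (mem_ball.mp hw)).2
  have h1 : (∫ z in ball z₀ ε, Complex.normSq (f z)) ≤ ∫ z in Ω, Complex.normSq (f z) := by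
    apply setIntegral_mono_set hintsq
    · exact Eventually.of_forall fun z => Complex.normSq_nonneg _
    · exact HasSubset.Subset.eventuallyLE hballΩ
  have h2 : Complex.normSq (f z₀) / 2 * (volume (ball z₀ ε)).toReal
      ≤ ∫ z in ball z₀ ε, Complex.normSq (f z) := by
    apply setIntegral_ge_of_const_le_real measurableSet_ball measure_ball_lt_top.ne
    · intro x hx
      exact (hball (mem_ball.mp hx)).1.le
    · exact hintsq.mono_set hballΩ
  have h3 : 0 < (volume (ball z₀ ε)).toReal :=
    ENNReal.toReal_pos (measure_ball_pos volume z₀ hεpos).ne' measure_ball_lt_top.ne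
  nlinarith [hnsq, h1, h2, h3, hv]


lemma seqContLinf_component {S : Set ℂ} {v : ℕ → ℂ → ℂ} (h : SeqContLinf S v) (n : ℕ) :
    ContinuousOn (v n) S := by
  intro z hz
  rw [Metric.continuousWithinAt_iff]
  intro ε hε
  obtain ⟨δ, hδ, hh⟩ := h.2 z hz ε hε
  exact ⟨δ, hδ, fun x hx hdist => by rw [Complex.dist_eq]; exact hh x hx hdist n⟩


/-- Lemma 2.5. Let `u_k : ℂ → ℂ` (for odd `k ∈ ℤ`) be fixed, and for
`m ≥ 1` let `u^{2m−1} = ⟨u_{2m−1}, u_{2m−3}, …, u₁, u₋₁, u₋₃, …⟩` be the augmented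
sequence. If every `u^{2m−1}` is `L`-analytic and the boundary traces satisfy
`u_{2m−1}|_Γ = conj(u_{−(2m−1)})|_Γ` for every `m ≥ 1`, then
`u_{2m−1} = conj(u_{−(2m−1)})` throughout `Ω`. -/
theorem conj_identity_of_LAnalytic_traces
    (Ω : Set ℂ) (hΩo : IsOpen Ω) (hΩb : Bornology.IsBounded Ω)
    (hΩsc : StrictConvex ℝ Ω) (hΩne : Ω.Nonempty)
    (u : ℤ → ℂ → ℂ)
    (hLa : ∀ m : ℕ, 1 ≤ m → IsLkAnalytic 1 Ω (fun n z =>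
      if (n : ℤ) < (m : ℤ) then u (2 * ((m : ℤ) - (n : ℤ)) - 1) z
      else u (-(2 * ((n : ℤ) - (m : ℤ)) + 1)) z))
    (htr : ∀ m : ℕ, 1 ≤ m → ∀ ζ ∈ frontier Ω,
      u (2 * (m : ℤ) - 1) ζ = (starRingEnd ℂ) (u (-(2 * (m : ℤ) - 1)) ζ)) :
    ∀ m : ℕ, 1 ≤ m → ∀ z ∈ Ω,
      u (2 * (m : ℤ) - 1) z = (starRingEnd ℂ) (u (-(2 * (m : ℤ) - 1)) z) := by
  classical
  have hconv : Convex ℝ Ω := hΩsc.convex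
  -- positive and negative odd components
  set P : ℕ → ℂ → ℂ := fun j => u (2 * (j : ℤ) + 1) with hPdef
  set N : ℕ → ℂ → ℂ := fun j => u (-(2 * (j : ℤ) + 1)) with hNdef
  -- extraction of components
  have hcomp_lt : ∀ (m n : ℕ), n < m →
      (fun z => if (n : ℤ) < (m : ℤ) then u (2 * ((m : ℤ) - (n : ℤ)) - 1) z
        else u (-(2 * ((n : ℤ) - (m : ℤ)) + 1)) z) = u (2 * ((m : ℤ) - (n : ℤ)) - 1) := by
    intro m n hnm
    funext w
    rw [if_pos (by exact_mod_cast hnm)]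
  have hcomp_ge : ∀ (m n : ℕ), m ≤ n →
      (fun z => if (n : ℤ) < (m : ℤ) then u (2 * ((m : ℤ) - (n : ℤ)) - 1) z
        else u (-(2 * ((n : ℤ) - (m : ℤ)) + 1)) z) = u (-(2 * ((n : ℤ) - (m : ℤ)) + 1)) := by
    intro m n hnm
    funext w
    rw [if_neg (by exact_mod_cast not_lt.mpr hnm)]
  -- continuity of components on the closure
  have hPc : ∀ j : ℕ, ContinuousOn (P j) (closure Ω) := by
    intro j
    have h := seqContLinf_component (hLa (j + 1) (by omega)).1 0
    rw [hcomp_lt (j + 1) 0 (by omega)] at h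
    have hidx : 2 * (((j + 1 : ℕ) : ℤ) - ((0 : ℕ) : ℤ)) - 1 = 2 * (j : ℤ) + 1 := by
      push_cast; ring
    rwa [hidx] at h
  have hNc : ∀ j : ℕ, ContinuousOn (N j) (closure Ω) := by
    intro j
    have h := seqContLinf_component (hLa 1 le_rfl).1 (j + 1)
    rw [hcomp_ge 1 (j + 1) (by omega)] at h
    have hidx : -(2 * (((j + 1 : ℕ) : ℤ) - ((1 : ℕ) : ℤ)) + 1) = -(2 * (j : ℤ) + 1) := by
      push_cast; ring
    rwa [hidx] at h
  have hPd : ∀ j : ℕ, ContDiffOn ℝ 1 (P j) Ω := by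
    intro j
    have h := (hLa (j + 1) (by omega)).2.1 0
    beta_reduce at h
    rw [hcomp_lt (j + 1) 0 (by omega)] at h
    have hidx : 2 * (((j + 1 : ℕ) : ℤ) - ((0 : ℕ) : ℤ)) - 1 = 2 * (j : ℤ) + 1 := by
      push_cast; ring
    rwa [hidx] at h
  have hNd : ∀ j : ℕ, ContDiffOn ℝ 1 (N j) Ω := by
    intro j
    have h := (hLa 1 le_rfl).2.1 (j + 1)
    beta_reduce at h
    rw [hcomp_ge 1 (j + 1) (by omega)] at h
    have hidx : -(2 * (((j + 1 : ℕ) : ℤ) - ((1 : ℕ) : ℤ)) + 1) = -(2 * (j : ℤ) + 1) := by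
      push_cast; ring
    rwa [hidx] at h
  -- transport equations
  have hA : ∀ j : ℕ, ∀ z ∈ Ω, dbar (P (j + 1)) z + ddz (P j) z = 0 := by
    intro j z hz
    have h := (hLa (j + 2) (by omega)).2.2 0 z hz
    beta_reduce at h
    rw [hcomp_lt (j + 2) 0 (by omega), hcomp_lt (j + 2) (0 + 1) (by omega)] at h
    have hidx1 : 2 * (((j + 2 : ℕ) : ℤ) - ((0 : ℕ) : ℤ)) - 1 = 2 * ((j + 1 : ℕ) : ℤ) + 1 := by
      push_cast; ring
    have hidx2 : 2 * (((j + 2 : ℕ) : ℤ) - ((0 + 1 : ℕ) : ℤ)) - 1 = 2 * (j : ℤ) + 1 := by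
      push_cast; ring
    rw [hidx1, hidx2] at h
    exact h
  have hB : ∀ j : ℕ, ∀ z ∈ Ω, dbar (N j) z + ddz (N (j + 1)) z = 0 := by
    intro j z hz
    have h := (hLa 1 le_rfl).2.2 (j + 1) z hz
    beta_reduce at h
    rw [hcomp_ge 1 (j + 1) (by omega), hcomp_ge 1 (j + 1 + 1) (by omega)] at h
    have hidx1 : -(2 * (((j + 1 : ℕ) : ℤ) - ((1 : ℕ) : ℤ)) + 1) = -(2 * (j : ℤ) + 1) := by
      push_cast; ring
    have hidx2 : -(2 * (((j + 1 + 1 : ℕ) : ℤ) - ((1 : ℕ) : ℤ)) + 1)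
        = -(2 * ((j + 1 : ℕ) : ℤ) + 1) := by
      push_cast; ring
    rw [hidx1, hidx2] at h
    exact h
  -- the difference sequence
  set c : ℕ → ℂ → ℂ := fun j w => P j w - (starRingEnd ℂ) (N j w) with hcdef
  have hcc : ∀ j, ContinuousOn (c j) (closure Ω) := by
    intro j
    exact (hPc j).sub (Complex.continuous_conj.comp_continuousOn (hNc j))
  have hcd : ∀ j, ContDiffOn ℝ 1 (c j) Ω := by
    intro j
    apply (hPd j).sub
    have hcj : ContDiff ℝ 1 (fun w : ℂ => (starRingEnd ℂ) w) :=
      Complex.conjCLE.toContinuousLinearMap.contDiff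
    exact hcj.comp_contDiffOn (hNd j)
  have hcbd : ∀ j, ∀ ζ ∈ frontier Ω, c j ζ = 0 := by
    intro j ζ hζ
    have h := htr (j + 1) (by omega) ζ hζ
    have hidx1 : 2 * ((j + 1 : ℕ) : ℤ) - 1 = 2 * (j : ℤ) + 1 := by push_cast; ring
    rw [hidx1] at h
    simp only [hcdef, hPdef, hNdef]
    rw [h]
    ring
  -- the chain identity for fderivs
  have hchain : ∀ j : ℕ, ∀ z ∈ Ω,
      fderiv ℝ (c j) z 1 - Complex.I * fderiv ℝ (c j) z Complex.I
        + (fderiv ℝ (c (j + 1)) z 1 + Complex.I * fderiv ℝ (c (j + 1)) z Complex.I) = 0 := by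
    intro j z hz
    have hPdz : ∀ i : ℕ, HasFDerivAt (P i) (fderiv ℝ (P i) z) z := fun i =>
      (((hPd i).differentiableOn one_ne_zero).differentiableAt (hΩo.mem_nhds hz)).hasFDerivAt
    have hNdz : ∀ i : ℕ, HasFDerivAt (N i) (fderiv ℝ (N i) z) z := fun i =>
      (((hNd i).differentiableOn one_ne_zero).differentiableAt (hΩo.mem_nhds hz)).hasFDerivAt
    have hconjd : ∀ i : ℕ, HasFDerivAt (fun w => (starRingEnd ℂ) (N i w))
        (Complex.conjCLE.toContinuousLinearMap.comp (fderiv ℝ (N i) z)) z := fun i =>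
      (Complex.conjCLE.toContinuousLinearMap.hasFDerivAt).comp z (hNdz i)
    have hcd1 : HasFDerivAt (c j)
        (fderiv ℝ (P j) z - Complex.conjCLE.toContinuousLinearMap.comp (fderiv ℝ (N j) z)) z :=
      (hPdz j).sub (hconjd j)
    have hcd2 : HasFDerivAt (c (j + 1))
        (fderiv ℝ (P (j + 1)) z
          - Complex.conjCLE.toContinuousLinearMap.comp (fderiv ℝ (N (j + 1)) z)) z :=
      (hPdz (j + 1)).sub (hconjd (j + 1))
    rw [hcd1.fderiv, hcd2.fderiv]
    have hAz := hA j z hz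
    have hBz := hB j z hz
    simp only [dbar, ddz] at hAz hBz
    have hBzc := congrArg (starRingEnd ℂ) hBz
    simp only [map_add, map_div₀, map_mul, map_sub, Complex.conj_I, map_zero,
      map_ofNat] at hBzc
    simp only [ContinuousLinearMap.sub_apply, ContinuousLinearMap.comp_apply,
      ContinuousLinearEquiv.coe_coe, Complex.conjCLE_apply]
    linear_combination 2 * hAz - 2 * hBzc
  -- all moments vanish
  have hM : ∀ a : ℕ, ∀ j b : ℕ, (∫ z in Ω, c j z * (starRingEnd ℂ z) ^ a * z ^ b) = 0 := by
    intro a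
    induction a with
    | zero =>
      intro j b
      have h := moment_key Ω hΩo hΩb hconv hΩne (c j) (c (j + 1)) (hcc j) (hcc (j + 1))
        (hcd j) (hcd (j + 1)) (hchain j) (fun z hz => ⟨hcbd j z hz, hcbd (j + 1) z hz⟩) 0 (b + 1)
      simp only [Nat.cast_zero, zero_mul, add_zero, Nat.add_sub_cancel, Nat.cast_add,
        Nat.cast_one] at h
      have hb1 : ((b : ℂ) + 1) ≠ 0 := by
        have := Nat.cast_add_one_ne_zero (R := ℂ) b
        exact_mod_cast this
      exact (mul_eq_zero.mp h).resolve_left hb1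
    | succ a ih =>
      intro j b
      have h := moment_key Ω hΩo hΩb hconv hΩne (c j) (c (j + 1)) (hcc j) (hcc (j + 1))
        (hcd j) (hcd (j + 1)) (hchain j) (fun z hz => ⟨hcbd j z hz, hcbd (j + 1) z hz⟩)
        (a + 1) (b + 1)
      simp only [Nat.add_sub_cancel, Nat.cast_add, Nat.cast_one] at h
      rw [ih (j + 1) (b + 1)] at h
      simp only [mul_zero, add_zero] at h
      have hb1 : ((b : ℂ) + 1) ≠ 0 := by
        have := Nat.cast_add_one_ne_zero (R := ℂ) b
        exact_mod_cast this
      exact (mul_eq_zero.mp h).resolve_left hb1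
  -- conclude c j = 0 on Ω
  have hczero : ∀ j : ℕ, ∀ z ∈ Ω, c j z = 0 := by
    intro j
    exact vanish_of_moments Ω hΩo hΩb (c j) (hcc j) (fun a b => hM a j b)
  -- final index juggling
  intro m hm z hz
  have h := hczero (m - 1) z hz
  simp only [hcdef, hPdef, hNdef] at h
  have hidx : 2 * (((m - 1 : ℕ)) : ℤ) + 1 = 2 * (m : ℤ) - 1 := by
    have : ((m - 1 : ℕ) : ℤ) = (m : ℤ) - 1 := by
      rw [Int.ofNat_sub hm]; rfl
    rw [this]; ring
  rw [hidx] at h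
  exact sub_eq_zero.mp h

end RangeDoppler
end
end

section
/- Let a ∈ C¹(Ω) ∩ C(Ω̄) be real valued with a > 0 in Ω, and let f ∈ C¹(Ω) ∩ C(Ω̄) be real valued with f/a ∈ C₀(Ω̄) (i.e. f/a extends continuously to Ω̄ and vanishes on Γ). Define the real valued vector field F := −∇(f/a). Then the attenuated Doppler data of F equals the attenuated X-ray data of f: if g is the trace on Γ × S¹ of a solution w of θ·∇w + aw = f in Ω × S¹ (so g ∈ R_af), then g is also the trace of a solution u of θ·∇u + au = θ·F (so g ∈ D_aF). -/
noncomputable section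

open Complex MeasureTheory Filter Topology Metric Set

namespace RangeDoppler

/-- Theorem 5.1 (i). Let `a ∈ C¹(Ω) ∩ C(Ω̄)` be real valued with
`a > 0` in `Ω`, and let `f ∈ C¹(Ω) ∩ C(Ω̄)` be real valued with `f/a ∈ C₀(Ω̄)`. Then the
vector field `F := −∇(f/a)` has the same attenuated Doppler data as the attenuated X-ray
data of `f`: if `g` is the trace on `Γ × S¹` of a solution `w` of `θ·∇w + aw = f`, then
`g` is also the trace of a solution `u` of `θ·∇u + au = θ·F`. -/
theorem xray_data_is_doppler_data_of_gradient
    (Ω : Set ℂ) (hΩo : IsOpen Ω) (hΩb : Bornology.IsBounded Ω)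
    (hΩsc : StrictConvex ℝ Ω) (hΩne : Ω.Nonempty)
    (a : ℂ → ℝ) (ha1 : ContDiffOn ℝ 1 a Ω) (ha2 : ContinuousOn a (closure Ω))
    (hapos : ∀ x ∈ Ω, 0 < a x)
    (f : ℂ → ℝ) (hf1 : ContDiffOn ℝ 1 f Ω) (hf2 : ContinuousOn f (closure Ω))
    (hfa : ContinuousOn (fun y => f y / a y) (closure Ω))
    (hfa0 : ∀ ζ ∈ frontier Ω, f ζ / a ζ = 0)
    (g : ℂ → ℂ → ℝ)
    (hg : IsTraceOfTransportSolution Ω a (fun x _ => f x) g) :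
    IsTraceOfTransportSolution Ω a
      (fun x θ => dotJ θ (-gradC (fun y => f y / a y) x)) g := by
  obtain ⟨w, hwcont, hweq, hwtr⟩ := hg
  have hqdiff : ∀ x ∈ Ω, DifferentiableAt ℝ (fun y => f y / a y) x := by
    intro x hx
    have h1 : DifferentiableAt ℝ f x :=
      (hf1.contDiffAt (hΩo.mem_nhds hx)).differentiableAt one_ne_zero
    have h2 : DifferentiableAt ℝ a x :=
      (ha1.contDiffAt (hΩo.mem_nhds hx)).differentiableAt one_ne_zero
    simp only [div_eq_mul_inv]
    exact h1.mul (h2.inv (hapos x hx).ne')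
  refine ⟨fun x θ => w x θ - f x / a x, ?_, ?_, ?_⟩
  · intro θ hθ
    exact ⟨(hwcont θ hθ).1.sub hfa, (hwcont θ hθ).2.sub
      fun x hx => (hqdiff x hx).differentiableWithinAt⟩
  · intro θ hθ x hx
    have hfd := hqdiff x hx
    have hwd : DifferentiableAt ℝ (fun y => w y θ) x :=
      ((hwcont θ hθ).2 x hx).differentiableAt (hΩo.mem_nhds hx)
    have hsub : fderiv ℝ (fun y => w y θ - f y / a y) x =
        fderiv ℝ (fun y => w y θ) x - fderiv ℝ (fun y => f y / a y) x :=
      fderiv_sub hwd hfd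
    have hq : fderiv ℝ (fun y => f y / a y) x θ =
        θ.re * fderiv ℝ (fun y => f y / a y) x 1 +
        θ.im * fderiv ℝ (fun y => f y / a y) x Complex.I := by
      have hθd : θ = θ.re • (1:ℂ) + θ.im • Complex.I := by
        simp [Complex.ext_iff]
      conv_lhs => rw [hθd]
      simp only [map_add, ContinuousLinearMap.map_smul, smul_eq_mul]
    have heq := hweq θ hθ x hx
    have hc : a x * (f x / a x) = f x := mul_div_cancel₀ _ (hapos x hx).ne'
    rw [hsub]
    simp only [ContinuousLinearMap.sub_apply, dotJ, gradC, hq]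
    simp only [Complex.neg_re, Complex.neg_im, Complex.add_re, Complex.add_im,
      Complex.ofReal_re, Complex.ofReal_im, Complex.mul_re, Complex.mul_im,
      Complex.I_re, Complex.I_im]
    ring_nf
    have hc' : a x * f x * (a x)⁻¹ = f x := by
      rw [mul_assoc, mul_comm (f x), ← mul_assoc, mul_inv_cancel₀ (hapos x hx).ne', one_mul]
    simp only at heq
    linarith [heq, hc']
  · intro ζ hζ θ hθ
    show w ζ θ - f ζ / a ζ = g ζ θ
    rw [hwtr ζ hζ θ hθ, hfa0 ζ hζ, sub_zero]

end RangeDoppler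
end
end
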